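/- arXiv:1301.5206 — 5 statements merged into one kernel-verified Lean document; each statement's English description precedes it below -/
import Mathlib

section
/- Let (A, B) be a complete cotorsion pair in an abelian category C. Then every morphism h : X → Y in C factors as h = g ∘ f, where f is a monomorphism whose cokernel belongs to A and g is an epimorphism whose kernel belongs to B. -/
open CategoryTheory CategoryTheory.Limits

universe v u

variable {C : Type u} [Category.{v} C] [Abelian C]

/-- `Ext¹(A, B) = 0`, phrased as: every short exact sequence `0 → B → E → A → 0`
splits. -/
def Ext1Zero (A B : C) : Prop :=
  ∀ (E : C) (i : B ⟶ E) (p : E ⟶ A) (w : i ≫ p = 0),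
    (ShortComplex.mk i p w).ShortExact → ∃ s : A ⟶ E, s ≫ p = 𝟙 A

/-- The right `Ext¹`-orthogonal class `S^⊥` of a class of objects `S`. -/
def rightPerp (S : Set C) : Set C := {B | ∀ A ∈ S, Ext1Zero A B}

/-- The left `Ext¹`-orthogonal class `⊥S` of a class of objects `S`. -/
def leftPerp (S : Set C) : Set C := {A | ∀ B ∈ S, Ext1Zero A B}

/-- `(𝓐, 𝓑)` is a cotorsion pair: `𝓐 = ⊥𝓑` and `𝓑 = 𝓐^⊥`. -/
structure IsCotorsionPair (𝓐 𝓑 : Set C) : Prop where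
  left_eq : 𝓐 = leftPerp 𝓑
  right_eq : 𝓑 = rightPerp 𝓐

/-- `(𝓐, 𝓑)` is a complete cotorsion pair: a cotorsion pair admitting approximation
sequences `0 → X → B_X → A_X → 0` and `0 → B^X → A^X → X → 0` for every object `X`. -/
structure IsCompleteCotorsionPair (𝓐 𝓑 : Set C) extends IsCotorsionPair 𝓐 𝓑 : Prop where
  approx₁ : ∀ X : C, ∃ (B A : C) (i : X ⟶ B) (p : B ⟶ A) (w : i ≫ p = 0),
    (ShortComplex.mk i p w).ShortExact ∧ B ∈ 𝓑 ∧ A ∈ 𝓐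
  approx₂ : ∀ X : C, ∃ (B A : C) (i : B ⟶ A) (p : A ⟶ X) (w : i ≫ p = 0),
    (ShortComplex.mk i p w).ShortExact ∧ B ∈ 𝓑 ∧ A ∈ 𝓐


lemma ext1Zero_of_iso_left {A A' B : C} (e : A' ≅ A) (hA : Ext1Zero A B) : Ext1Zero A' B := by
  intro E i p w hse
  have w' : i ≫ (p ≫ e.hom) = 0 := by rw [← Category.assoc, w, zero_comp]
  have hse' : (ShortComplex.mk i (p ≫ e.hom) w').ShortExact := by
    refine ShortComplex.shortExact_of_iso ?_ hse
    exact ShortComplex.isoMk (Iso.refl _) (Iso.refl _) e (by simp) (by simp)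
  obtain ⟨s, hs⟩ := hA _ i _ w' hse'
  refine ⟨e.hom ≫ s, ?_⟩
  have hsp : s ≫ p = e.inv := by
    rw [← cancel_mono e.hom, Iso.inv_hom_id, Category.assoc]
    exact hs
  rw [Category.assoc, hsp, e.hom_inv_id]

lemma ext1Zero_of_iso_right {A B B' : C} (e : B' ≅ B) (hA : Ext1Zero A B) : Ext1Zero A B' := by
  intro E i p w hse
  have w' : (e.inv ≫ i) ≫ p = 0 := by rw [Category.assoc, w, comp_zero]
  have hse' : (ShortComplex.mk (e.inv ≫ i) p w').ShortExact := by
    refine ShortComplex.shortExact_of_iso ?_ hse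
    exact ShortComplex.isoMk e (Iso.refl _) (Iso.refl _) (by simp) (by simp)
  exact hA _ _ _ w' hse'

lemma shortExact_pullback {B E W A P : C} {i : B ⟶ E} {p : E ⟶ W} {w : i ≫ p = 0}
    (hse : (ShortComplex.mk i p w).ShortExact) (α : A ⟶ W)
    {fst : P ⟶ E} {snd : P ⟶ A} (hP : IsPullback fst snd p α) :
    (ShortComplex.mk (hP.lift i 0 (by simp [w])) snd (hP.lift_snd i 0 (by simp [w]))).ShortExact := by
  have hmono : Mono i := hse.mono_f
  have hepi : Epi p := hse.epi_g
  have hsnd : Epi snd := by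
    have h1 : Epi (hP.isoPullback.hom ≫ pullback.snd p α) := epi_comp _ _
    rwa [hP.isoPullback_hom_snd] at h1
  have hlift : Mono (hP.lift i 0 (by simp [w])) := mono_of_mono_fac (hP.lift_fst i 0 (by simp [w]))
  refine ShortComplex.ShortExact.mk' ?_ hlift hsnd
  rw [ShortComplex.exact_iff_exact_up_to_refinements]
  intro A₀ x hx
  replace hx : x ≫ snd = 0 := hx
  have hxp : (x ≫ fst) ≫ p = 0 := by
    rw [Category.assoc, hP.w, ← Category.assoc, hx, zero_comp]
  obtain ⟨A₁, π, hπ, u, hu⟩ := hse.exact.exact_up_to_refinements (x ≫ fst) hxp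
  replace hu : π ≫ (x ≫ fst) = u ≫ i := hu
  refine ⟨A₁, π, hπ, u, ?_⟩
  show π ≫ x = u ≫ hP.lift i 0 _
  apply hP.hom_ext
  · rw [Category.assoc, Category.assoc, hP.lift_fst]
    simpa using hu
  · rw [Category.assoc, Category.assoc, hP.lift_snd, comp_zero, hx, comp_zero]

lemma shortExact_pushout {K M Q N P : C} {a : K ⟶ M} {c : M ⟶ Q} {w : a ≫ c = 0}
    (hse : (ShortComplex.mk a c w).ShortExact) (b : K ⟶ N)
    {m : M ⟶ P} {n : N ⟶ P} (hP : IsPushout a b m n) :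
    (ShortComplex.mk n (hP.desc c 0 (by simp [w])) (hP.inr_desc c 0 (by simp [w]))).ShortExact := by
  have hmono : Mono a := hse.mono_f
  have hepi : Epi c := hse.epi_g
  have hd : Epi (hP.desc c 0 (by simp [w])) := epi_of_epi_fac (hP.inl_desc c 0 (by simp [w]))
  have hn : Mono n := by
    have h1 : Mono (pushout.inr a b ≫ hP.isoPushout.inv) := mono_comp _ _
    rwa [hP.inr_isoPushout_inv] at h1
  refine ShortComplex.ShortExact.mk' ?_ hn hd
  have hbd : Epi (biprod.desc m n) := by
    constructor
    intro T u v huv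
    apply hP.hom_ext
    · have h1 := biprod.inl ≫= huv
      simpa using h1
    · have h2 := biprod.inr ≫= huv
      simpa using h2
  rw [ShortComplex.exact_iff_exact_up_to_refinements]
  intro A₀ x hx
  replace hx : x ≫ hP.desc c 0 (by simp [w]) = 0 := hx
  obtain ⟨A₁, π, hπ, y, hy⟩ := surjective_up_to_refinements_of_epi (biprod.desc m n) x
  have hy' : π ≫ x = (y ≫ biprod.fst) ≫ m + (y ≫ biprod.snd) ≫ n := by
    rw [hy, biprod.desc_eq, Preadditive.comp_add, Category.assoc, Category.assoc]
  have hu : (y ≫ biprod.fst) ≫ c = 0 := by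
    have h0 : (π ≫ x) ≫ hP.desc c 0 (by simp [w]) = 0 := by rw [Category.assoc, hx, comp_zero]
    rw [hy', Preadditive.add_comp] at h0
    simp only [Category.assoc] at h0 ⊢
    rw [hP.inl_desc, hP.inr_desc] at h0
    simpa using h0
  obtain ⟨A₂, π', hπ', k, hk⟩ := hse.exact.exact_up_to_refinements (y ≫ biprod.fst) hu
  replace hk : π' ≫ (y ≫ biprod.fst) = k ≫ a := hk
  refine ⟨A₂, π' ≫ π, epi_comp _ _, k ≫ b + π' ≫ (y ≫ biprod.snd), ?_⟩
  show (π' ≫ π) ≫ x = _ ≫ n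
  rw [Category.assoc, hy', Preadditive.comp_add, Preadditive.add_comp,
    ← Category.assoc π' _ m, hk, Category.assoc, hP.w, ← Category.assoc,
    ← Category.assoc, ← Category.assoc]

lemma cokernel_comp_shortExact {X M P Q₁ Q₂ : C} {f₁ : X ⟶ M} {c₁ : M ⟶ Q₁} {w₁ : f₁ ≫ c₁ = 0}
    (h₁ : (ShortComplex.mk f₁ c₁ w₁).ShortExact)
    {f₂ : M ⟶ P} {c₂ : P ⟶ Q₂} {w₂ : f₂ ≫ c₂ = 0}
    (h₂ : (ShortComplex.mk f₂ c₂ w₂).ShortExact) :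
    ∃ (e₁ : Q₁ ⟶ cokernel (f₁ ≫ f₂)) (e₂ : cokernel (f₁ ≫ f₂) ⟶ Q₂) (w : e₁ ≫ e₂ = 0),
      (ShortComplex.mk e₁ e₂ w).ShortExact := by
  have hmono₁ : Mono f₁ := h₁.mono_f
  have hepi₁ : Epi c₁ := h₁.epi_g
  have hmono₂ : Mono f₂ := h₂.mono_f
  have hepi₂ : Epi c₂ := h₂.epi_g
  set π := cokernel.π (f₁ ≫ f₂) with hπdef
  obtain ⟨e₁, he₁⟩ := CokernelCofork.IsColimit.desc' h₁.gIsCokernel (f₂ ≫ π)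
    (by rw [← Category.assoc]; exact cokernel.condition _)
  replace he₁ : c₁ ≫ e₁ = f₂ ≫ π := he₁
  set e₂ : cokernel (f₁ ≫ f₂) ⟶ Q₂ := cokernel.desc (f₁ ≫ f₂) c₂
    (by rw [Category.assoc, w₂, comp_zero])
  have hπe₂ : π ≫ e₂ = c₂ := cokernel.π_desc _ _ _
  have hw : e₁ ≫ e₂ = 0 := by
    rw [← cancel_epi c₁, ← Category.assoc, he₁, Category.assoc, hπe₂, w₂, comp_zero]
  have hexP : (ShortComplex.mk (f₁ ≫ f₂) π (cokernel.condition _)).Exact :=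
    ShortComplex.exact_of_g_is_cokernel _ (cokernelIsCokernel _)
  refine ⟨e₁, e₂, hw, ShortComplex.ShortExact.mk' ?_ ?_ (epi_of_epi_fac hπe₂)⟩
  · -- exactness at the cokernel
    rw [ShortComplex.exact_iff_exact_up_to_refinements]
    intro A₀ x hx
    replace hx : x ≫ e₂ = 0 := hx
    obtain ⟨A₁, π₁, hπ₁, v, hv⟩ := surjective_up_to_refinements_of_epi π x
    have hvc : v ≫ c₂ = 0 := by
      rw [← hπe₂, ← Category.assoc, ← hv, Category.assoc, hx, comp_zero]
    obtain ⟨A₂, π₂, hπ₂, mM, hm⟩ := h₂.exact.exact_up_to_refinements v hvc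
    replace hm : π₂ ≫ v = mM ≫ f₂ := hm
    refine ⟨A₂, π₂ ≫ π₁, epi_comp _ _, mM ≫ c₁, ?_⟩
    show (π₂ ≫ π₁) ≫ x = (mM ≫ c₁) ≫ e₁
    rw [Category.assoc, hv, ← Category.assoc, hm, Category.assoc, Category.assoc, he₁,
      ← Category.assoc]
  · -- e₁ is mono
    rw [Preadditive.mono_iff_cancel_zero]
    intro A₀ x hx
    obtain ⟨A₁, π₁, hπ₁, u, hu⟩ := surjective_up_to_refinements_of_epi c₁ x
    have huf : (u ≫ f₂) ≫ π = 0 := by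
      rw [Category.assoc, ← he₁, ← Category.assoc, ← hu, Category.assoc, hx, comp_zero]
    obtain ⟨A₂, π₂, hπ₂, xX, hxX⟩ := hexP.exact_up_to_refinements (u ≫ f₂) huf
    replace hxX : π₂ ≫ (u ≫ f₂) = xX ≫ (f₁ ≫ f₂) := hxX
    have hcanc : π₂ ≫ u = xX ≫ f₁ := by
      rw [← cancel_mono f₂, Category.assoc, hxX, Category.assoc]
    have hz : (π₂ ≫ π₁) ≫ x = 0 := by
      rw [Category.assoc, hu, ← Category.assoc, hcanc, Category.assoc, w₁, comp_zero]
    have hez : Epi (π₂ ≫ π₁) := epi_comp _ _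
    rw [← cancel_epi (π₂ ≫ π₁), hz, comp_zero]

lemma ext1Zero_extension {A₁ W A₂ B : C} {α : A₁ ⟶ W} {β : W ⟶ A₂} {w : α ≫ β = 0}
    (hse : (ShortComplex.mk α β w).ShortExact)
    (hA₁ : Ext1Zero A₁ B) (hA₂ : Ext1Zero A₂ B) : Ext1Zero W B := by
  have hmα : Mono α := hse.mono_f
  have heβ : Epi β := hse.epi_g
  intro E i p wip hE
  have hmi : Mono i := hE.mono_f
  have hep : Epi p := hE.epi_g
  -- Step 1: pull back along α and split, getting a lift `t : A₁ ⟶ E` of `α`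
  have hPB : IsPullback (pullback.fst p α) (pullback.snd p α) p α := IsPullback.of_hasPullback p α
  obtain ⟨s₁, hs₁⟩ := hA₁ _ _ _ _ (shortExact_pullback hE α hPB)
  have htp : (s₁ ≫ pullback.fst p α) ≫ p = α := by
    rw [Category.assoc, pullback.condition, ← Category.assoc, hs₁, Category.id_comp]
  set t : A₁ ⟶ E := s₁ ≫ pullback.fst p α with htdef
  have hmt : Mono t := mono_of_mono_fac htp
  -- Step 2: quotient by t
  have hexN : (ShortComplex.mk t (cokernel.π t) (cokernel.condition _)).Exact :=
    ShortComplex.exact_of_g_is_cokernel _ (cokernelIsCokernel _)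
  have hdw : t ≫ (p ≫ β) = 0 := by rw [← Category.assoc, htp, w]
  have hπNd : cokernel.π t ≫ cokernel.desc t (p ≫ β) hdw = p ≫ β := cokernel.π_desc _ _ _
  have hiNw : (i ≫ cokernel.π t) ≫ cokernel.desc t (p ≫ β) hdw = 0 := by
    rw [Category.assoc, hπNd, ← Category.assoc, wip, zero_comp]
  have hseN : (ShortComplex.mk (i ≫ cokernel.π t) (cokernel.desc t (p ≫ β) hdw)
      hiNw).ShortExact := by
    have hpe : Epi (p ≫ β) := epi_comp _ _
    refine ShortComplex.ShortExact.mk' ?_ ?_ (epi_of_epi_fac hπNd)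
    · -- exactness at cokernel t
      rw [ShortComplex.exact_iff_exact_up_to_refinements]
      intro A₀ x hx
      replace hx : x ≫ cokernel.desc t (p ≫ β) hdw = 0 := hx
      obtain ⟨B₁, π₁, hπ₁, v, hv⟩ := surjective_up_to_refinements_of_epi (cokernel.π t) x
      have hvb : (v ≫ p) ≫ β = 0 := by
        rw [Category.assoc, ← hπNd, ← Category.assoc, ← hv, Category.assoc, hx, comp_zero]
      obtain ⟨B₂, π₂, hπ₂, a₁, ha₁⟩ := hse.exact.exact_up_to_refinements (v ≫ p) hvb
      replace ha₁ : π₂ ≫ (v ≫ p) = a₁ ≫ α := ha₁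
      have hsub : (π₂ ≫ v - a₁ ≫ t) ≫ p = 0 := by
        rw [Preadditive.sub_comp, Category.assoc, Category.assoc, htp, ha₁, sub_self]
      obtain ⟨B₃, π₃, hπ₃, bB, hbB⟩ := hE.exact.exact_up_to_refinements _ hsub
      replace hbB : π₃ ≫ (π₂ ≫ v - a₁ ≫ t) = bB ≫ i := hbB
      have h6 : π₃ ≫ (π₂ ≫ v) = bB ≫ i + π₃ ≫ (a₁ ≫ t) := by
        rw [Preadditive.comp_sub] at hbB
        rw [← hbB, sub_add_cancel]
      refine ⟨B₃, π₃ ≫ π₂ ≫ π₁, epi_comp _ _, bB, ?_⟩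
      show (π₃ ≫ π₂ ≫ π₁) ≫ x = bB ≫ (i ≫ cokernel.π t)
      calc (π₃ ≫ π₂ ≫ π₁) ≫ x = (π₃ ≫ (π₂ ≫ v)) ≫ cokernel.π t := by
            simp only [Category.assoc]
            rw [hv]
        _ = bB ≫ (i ≫ cokernel.π t) := by
            rw [h6, Preadditive.add_comp, Category.assoc, Category.assoc, Category.assoc,
              cokernel.condition]
            simp
    · -- i ≫ cokernel.π t is mono
      rw [Preadditive.mono_iff_cancel_zero]
      intro A₀ x hx
      have hx' : (x ≫ i) ≫ cokernel.π t = 0 := by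
        rw [Category.assoc]; exact hx
      obtain ⟨B₁, π₁, hπ₁, u, hu⟩ := hexN.exact_up_to_refinements (x ≫ i) hx'
      replace hu : π₁ ≫ (x ≫ i) = u ≫ t := hu
      have hu0 : u ≫ α = 0 := by
        have h7 : (π₁ ≫ x ≫ i) ≫ p = 0 := by
          rw [Category.assoc, Category.assoc, wip, comp_zero, comp_zero]
        rw [← htp, ← Category.assoc, ← hu, h7]
      have hu' : u = 0 := (Preadditive.mono_iff_cancel_zero α).1 hmα _ u hu0
      have hxi : π₁ ≫ x ≫ i = 0 := by rw [hu, hu', zero_comp]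
      have hx0 : π₁ ≫ x = 0 := by
        rw [← cancel_mono i, zero_comp, Category.assoc, hxi]
      rw [← cancel_epi π₁, hx0, comp_zero]
  obtain ⟨s₂, hs₂⟩ := hA₂ _ _ _ _ hseN
  -- Step 4: pull back along s₂ and compare with the original sequence
  have hR : IsPullback (pullback.fst (cokernel.π t) s₂) (pullback.snd (cokernel.π t) s₂)
      (cokernel.π t) s₂ := IsPullback.of_hasPullback _ _
  have hlw : t ≫ cokernel.π t = (0 : A₁ ⟶ A₂) ≫ s₂ := by rw [cokernel.condition, zero_comp]
  have hseR : (ShortComplex.mk (hR.lift t 0 hlw) (pullback.snd (cokernel.π t) s₂)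
      (hR.lift_snd t 0 hlw)).ShortExact := by
    refine ShortComplex.ShortExact.mk' ?_ (mono_of_mono_fac (hR.lift_fst t 0 hlw)) inferInstance
    rw [ShortComplex.exact_iff_exact_up_to_refinements]
    intro A₀ x hx
    replace hx : x ≫ pullback.snd (cokernel.π t) s₂ = 0 := hx
    have hx' : (x ≫ pullback.fst (cokernel.π t) s₂) ≫ cokernel.π t = 0 := by
      rw [Category.assoc, pullback.condition, ← Category.assoc, hx, zero_comp]
    obtain ⟨B₁, π₁, hπ₁, a, ha⟩ := hexN.exact_up_to_refinements _ hx'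
    replace ha : π₁ ≫ (x ≫ pullback.fst (cokernel.π t) s₂) = a ≫ t := ha
    refine ⟨B₁, π₁, hπ₁, a, ?_⟩
    show π₁ ≫ x = a ≫ hR.lift t 0 hlw
    apply hR.hom_ext
    · rw [Category.assoc, Category.assoc, hR.lift_fst]
      simpa using ha
    · rw [Category.assoc, Category.assoc, hR.lift_snd, comp_zero, hx, comp_zero]
  have comm₁₂ : (𝟙 A₁) ≫ α = (hR.lift t 0 hlw) ≫ (pullback.fst (cokernel.π t) s₂ ≫ p) := by
    rw [Category.id_comp, ← Category.assoc, hR.lift_fst, htp]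
  have comm₂₃ : (pullback.fst (cokernel.π t) s₂ ≫ p) ≫ β =
      pullback.snd (cokernel.π t) s₂ ≫ (𝟙 A₂) := by
    rw [Category.comp_id, Category.assoc, ← hπNd, ← Category.assoc, pullback.condition,
      Category.assoc, hs₂, Category.comp_id]
  let φ : (ShortComplex.mk (hR.lift t 0 hlw) (pullback.snd (cokernel.π t) s₂)
      (hR.lift_snd t 0 hlw)) ⟶ (ShortComplex.mk α β w) :=
    ShortComplex.homMk (𝟙 A₁) (pullback.fst (cokernel.π t) s₂ ≫ p) (𝟙 A₂)
      comm₁₂ comm₂₃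
  have hiso : IsIso φ.τ₂ :=
    ShortComplex.isIso₂_of_shortExact_of_isIso₁₃' φ hseR hse
      (show IsIso (𝟙 A₁) from inferInstance) (show IsIso (𝟙 A₂) from inferInstance)
  have hψ : IsIso (pullback.fst (cokernel.π t) s₂ ≫ p) := hiso
  refine ⟨inv (pullback.fst (cokernel.π t) s₂ ≫ p) ≫ pullback.fst (cokernel.π t) s₂, ?_⟩
  rw [Category.assoc, IsIso.inv_comp_eq]
  simp

/-- Let `(𝓐, 𝓑)` be a complete cotorsion pair in an abelian category `C`.  Then every
morphism `h : X ⟶ Y` in `C` factors as `h = g ∘ f`, where `f` is a monomorphism whose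
cokernel belongs to `𝓐` and `g` is an epimorphism whose kernel belongs to `𝓑`. -/
theorem stmt_4 (𝓐 𝓑 : Set C) (hpair : IsCompleteCotorsionPair 𝓐 𝓑)
    {X Y : C} (h : X ⟶ Y) :
    ∃ (Z : C) (f : X ⟶ Z) (g : Z ⟶ Y),
      f ≫ g = h ∧ Mono f ∧ cokernel f ∈ 𝓐 ∧ Epi g ∧ kernel g ∈ 𝓑 := by
  obtain ⟨B₁, A₁, j₁, q, w₁, hse₁, hB₁, hA₁⟩ := hpair.approx₂ Y
  have hq : Epi q := hse₁.epi_g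
  have hg₀e : Epi (biprod.desc h q) := epi_of_epi_fac (biprod.inr_desc h q)
  have hK : (ShortComplex.mk (kernel.ι (biprod.desc h q)) (biprod.desc h q)
      (kernel.condition _)).ShortExact :=
    ShortComplex.ShortExact.mk'
      (ShortComplex.exact_of_f_is_kernel _ (kernelIsKernel (biprod.desc h q)))
      inferInstance hg₀e
  obtain ⟨B₂, A₂, j, r, w₂, hse₂, hB₂, hA₂⟩ := hpair.approx₁ (kernel (biprod.desc h q))
  have hmj : Mono j := hse₂.mono_f
  have hPO : IsPushout (kernel.ι (biprod.desc h q)) j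
      (pushout.inl (kernel.ι (biprod.desc h q)) j)
      (pushout.inr (kernel.ι (biprod.desc h q)) j) := IsPushout.of_hasPushout _ _
  have hseq := shortExact_pushout hK j hPO
  refine ⟨pushout (kernel.ι (biprod.desc h q)) j,
    biprod.inl ≫ pushout.inl (kernel.ι (biprod.desc h q)) j,
    hPO.desc (biprod.desc h q) 0 (by simp), ?_, ?_, ?_, ?_, ?_⟩
  · rw [Category.assoc, hPO.inl_desc, biprod.inl_desc]
  · have m1 : Mono (biprod.inl : X ⟶ X ⊞ A₁) := mono_of_mono_fac biprod.inl_fst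
    have m2 : Mono (pushout.inl (kernel.ι (biprod.desc h q)) j) := inferInstance
    exact mono_comp _ _
  · -- cokernel f ∈ 𝓐
    have hS1 := (ShortComplex.Splitting.ofHasBinaryBiproduct X A₁).shortExact
    have hS2 := shortExact_pushout hse₂ (kernel.ι (biprod.desc h q)) hPO.flip
    obtain ⟨e₁, e₂, we, hseQ⟩ := cokernel_comp_shortExact hS1 hS2
    rw [hpair.left_eq]
    have h1 : A₁ ∈ leftPerp 𝓑 := by rw [← hpair.left_eq]; exact hA₁
    have h2 : A₂ ∈ leftPerp 𝓑 := by rw [← hpair.left_eq]; exact hA₂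
    intro B hB
    exact ext1Zero_extension hseQ (h1 B hB) (h2 B hB)
  · exact epi_of_epi_fac (hPO.inl_desc (biprod.desc h q) 0 (by simp))
  · -- kernel g ∈ 𝓑
    have e : kernel (hPO.desc (biprod.desc h q) 0 (by simp)) ≅ B₂ :=
      IsLimit.conePointUniqueUpToIso (kernelIsKernel _) hseq.fIsKernel
    rw [hpair.right_eq]
    have h2 : B₂ ∈ rightPerp 𝓐 := by rw [← hpair.right_eq]; exact hB₂
    intro A hA
    exact ext1Zero_of_iso_right e (h2 A hA)
end

section
/- Let C be an abelian category, f : A → B a monomorphism and g : X → Y an epimorphism in C such that Ext¹_C(coker f, ker g) = 0. Then f has the left lifting property with respect to g: for every pair of morphisms u : A → X and v : B → Y with g ∘ u = v ∘ f there exists h : B → X with h ∘ f = u and g ∘ h = v. -/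
open CategoryTheory CategoryTheory.Limits

universe v u

variable {C : Type u} [Category.{v} C] [Abelian C]

open CategoryTheory.Abelian
open scoped Pseudoelement

/-- Let `C` be an abelian category, `f : A → B` a monomorphism and `g : X → Y` an
epimorphism in `C` such that `Ext¹_C(coker f, ker g) = 0`.  Then `f` has the left
lifting property with respect to `g`: for every `u : A → X` and `v : B → Y` with
`g ∘ u = v ∘ f` there exists `h : B → X` with `h ∘ f = u` and `g ∘ h = v`. -/
theorem stmt_5 {A B X Y : C} (f : A ⟶ B) (g : X ⟶ Y) (hf : Mono f) (hg : Epi g)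
    (hext : Ext1Zero (cokernel f) (kernel g)) :
    ∀ (u : A ⟶ X) (v : B ⟶ Y), u ≫ g = f ≫ v →
      ∃ h : B ⟶ X, f ≫ h = u ∧ h ≫ g = v := by
  haveI := hf
  haveI := hg
  intro u v huv
  -- the pullback `P = B ×_Y X`
  let a : A ⟶ pullback g v := pullback.lift u f huv
  have ha1 : a ≫ pullback.fst g v = u := pullback.lift_fst _ _ _
  have ha2 : a ≫ pullback.snd g v = f := pullback.lift_snd _ _ _
  haveI hamono : Mono a := by
    have : Mono (a ≫ pullback.snd g v) := by rw [ha2]; infer_instance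
    exact mono_of_mono a (pullback.snd g v)
  -- the inclusion of `ker g` into `P`, a kernel of `snd`
  let κ : kernel g ⟶ pullback g v := pullback.lift (kernel.ι g) 0 (by simp)
  have hκ1 : κ ≫ pullback.fst g v = kernel.ι g := pullback.lift_fst _ _ _
  have hκ2 : κ ≫ pullback.snd g v = 0 := pullback.lift_snd _ _ _
  haveI hκmono : Mono κ := by
    have : Mono (κ ≫ pullback.fst g v) := by rw [hκ1]; infer_instance
    exact mono_of_mono κ (pullback.fst g v)
  have isLimκ : IsLimit (KernelFork.ofι κ hκ2) := by
    refine KernelFork.IsLimit.ofι' κ hκ2 (fun {T} t ht => ?_)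
    refine ⟨kernel.lift g (t ≫ pullback.fst g v) ?_, ?_⟩
    · rw [Category.assoc, pullback.condition, ← Category.assoc, ht, zero_comp]
    · apply pullback.hom_ext
      · rw [Category.assoc, hκ1, kernel.lift_ι]
      · rw [Category.assoc, hκ2, comp_zero]; exact ht.symm
  -- the three basic exact sequences
  have S1exact : (ShortComplex.mk κ (pullback.snd g v) hκ2).Exact :=
    ShortComplex.exact_of_f_is_kernel _ isLimκ
  have S2exact : (ShortComplex.mk a (cokernel.π a) (cokernel.condition a)).Exact :=
    ShortComplex.exact_of_g_is_cokernel _ (cokernelIsCokernel a)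
  have S3exact : (ShortComplex.mk f (cokernel.π f) (cokernel.condition f)).Exact :=
    ShortComplex.exact_of_g_is_cokernel _ (cokernelIsCokernel f)
  -- the quotient sequence `0 → ker g → coker a → coker f → 0`
  have hap : a ≫ (pullback.snd g v ≫ cokernel.π f) = 0 := by
    rw [← Category.assoc, ha2, cokernel.condition]
  let p : cokernel a ⟶ cokernel f := cokernel.desc a _ hap
  have hqp : cokernel.π a ≫ p = pullback.snd g v ≫ cokernel.π f := cokernel.π_desc _ _ _
  let i : kernel g ⟶ cokernel a := κ ≫ cokernel.π a
  have hip : i ≫ p = 0 := by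
    show (κ ≫ cokernel.π a) ≫ p = 0
    rw [Category.assoc, hqp, ← Category.assoc, hκ2, zero_comp]
  haveI himono : Mono i := by
    apply Pseudoelement.mono_of_zero_of_map_zero
    intro x hx
    obtain ⟨y, hy⟩ := Pseudoelement.pseudo_exact_of_exact S2exact (κ x) (by
      rw [← Pseudoelement.comp_apply]; exact hx)
    have hfy : f y = 0 := by
      rw [← ha2, Pseudoelement.comp_apply, hy, ← Pseudoelement.comp_apply, hκ2]
      exact Pseudoelement.zero_apply _ _
    have hy0 : y = 0 :=
      Pseudoelement.zero_of_map_zero f (Pseudoelement.pseudo_injective_of_mono f) y hfy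
    have hκx : κ x = 0 := by rw [← hy, hy0, Pseudoelement.apply_zero]
    exact Pseudoelement.zero_of_map_zero κ (Pseudoelement.pseudo_injective_of_mono κ) x hκx
  haveI hpepi : Epi p := by
    have : Epi (cokernel.π a ≫ p) := by rw [hqp]; exact epi_comp _ _
    exact epi_of_epi (cokernel.π a) p
  have hSexact : (ShortComplex.mk i p hip).Exact := by
    apply Pseudoelement.exact_of_pseudo_exact
    intro y hy
    obtain ⟨z, hz⟩ := Pseudoelement.pseudo_surjective_of_epi (cokernel.π a) y
    have h1 : (cokernel.π f) ((pullback.snd g v) z) = 0 := by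
      rw [← Pseudoelement.comp_apply, ← hqp, Pseudoelement.comp_apply, hz]
      exact hy
    obtain ⟨w, hw⟩ := Pseudoelement.pseudo_exact_of_exact S3exact _ h1
    have h2 : (pullback.snd g v) z = (pullback.snd g v) (a w) := by
      rw [← Pseudoelement.comp_apply, ha2]; exact hw.symm
    obtain ⟨z', hz'0, hz'⟩ := Pseudoelement.sub_of_eq_image (pullback.snd g v) z (a w) h2
    have hqz' : (cokernel.π a) z' = y := by
      rw [hz' _ (cokernel.π a) (by
        rw [← Pseudoelement.comp_apply, cokernel.condition]
        exact Pseudoelement.zero_apply _ _), hz]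
    obtain ⟨k, hk⟩ := Pseudoelement.pseudo_exact_of_exact S1exact z' hz'0
    refine ⟨k, ?_⟩
    show i k = y
    rw [Pseudoelement.comp_apply, hk, hqz']
  have hSSE : (ShortComplex.mk i p hip).ShortExact := { exact := hSexact }
  -- split it
  obtain ⟨s, hs⟩ := hext (cokernel a) i p hip hSSE
  have iKer : IsLimit (KernelFork.ofι i hip) := hSexact.fIsKernel
  -- `P` is also the pullback of `p` and `cokernel.π f`
  let κ' : kernel g ⟶ pullback p (cokernel.π f) :=
    pullback.lift i 0 (by rw [hip, zero_comp])
  have hκ'1 : κ' ≫ pullback.fst p (cokernel.π f) = i := pullback.lift_fst _ _ _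
  have hκ'2 : κ' ≫ pullback.snd p (cokernel.π f) = 0 := pullback.lift_snd _ _ _
  haveI hκ'mono : Mono κ' := by
    have : Mono (κ' ≫ pullback.fst p (cokernel.π f)) := by rw [hκ'1]; infer_instance
    exact mono_of_mono κ' (pullback.fst p (cokernel.π f))
  have isLimκ' : IsLimit (KernelFork.ofι κ' hκ'2) := by
    refine KernelFork.IsLimit.ofι' κ' hκ'2 (fun {T} t ht => ?_)
    have h3 : (t ≫ pullback.fst p (cokernel.π f)) ≫ p = 0 := by
      rw [Category.assoc, pullback.condition, ← Category.assoc, ht, zero_comp]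
    obtain ⟨l, hl⟩ := KernelFork.IsLimit.lift' iKer _ h3
    refine ⟨l, ?_⟩
    apply pullback.hom_ext
    · rw [Category.assoc, hκ'1]; exact hl
    · rw [Category.assoc, hκ'2, comp_zero]; exact ht.symm
  have S1'exact : (ShortComplex.mk κ' (pullback.snd p (cokernel.π f)) hκ'2).Exact :=
    ShortComplex.exact_of_f_is_kernel _ isLimκ'
  let θ : pullback g v ⟶ pullback p (cokernel.π f) :=
    pullback.lift (cokernel.π a) (pullback.snd g v) hqp
  have hθ1 : θ ≫ pullback.fst p (cokernel.π f) = cokernel.π a := pullback.lift_fst _ _ _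
  have hθ2 : θ ≫ pullback.snd p (cokernel.π f) = pullback.snd g v := pullback.lift_snd _ _ _
  -- short five lemma : `θ` is an isomorphism
  have hcomm : κ ≫ θ = κ' := by
    apply pullback.hom_ext
    · rw [Category.assoc, hθ1, hκ'1]
    · rw [Category.assoc, hθ2, hκ'2]; exact hκ2
  let φ : ShortComplex.mk κ (pullback.snd g v) hκ2 ⟶
      ShortComplex.mk κ' (pullback.snd p (cokernel.π f)) hκ'2 :=
    { τ₁ := 𝟙 _
      τ₂ := θ
      τ₃ := 𝟙 _
      comm₁₂ := by dsimp; rw [Category.id_comp]; exact hcomm.symm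
      comm₂₃ := by dsimp; rw [Category.comp_id, hθ2] }
  have hS1SE : (ShortComplex.mk κ (pullback.snd g v) hκ2).ShortExact := { exact := S1exact }
  have hS1'SE : (ShortComplex.mk κ' (pullback.snd p (cokernel.π f)) hκ'2).ShortExact :=
    { exact := S1'exact }
  have hθiso : IsIso θ := by
    have := ShortComplex.isIso₂_of_shortExact_of_isIso₁₃' φ hS1SE hS1'SE
      (by dsimp [φ]; infer_instance) (by dsimp [φ]; infer_instance)
    exact this
  -- construct the lift
  let t' : B ⟶ pullback p (cokernel.π f) :=
    pullback.lift (cokernel.π f ≫ s) (𝟙 B)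
      (by rw [Category.assoc, hs, Category.comp_id, Category.id_comp])
  let t : B ⟶ pullback g v := t' ≫ inv θ
  have ht_snd : t ≫ pullback.snd g v = 𝟙 B := by
    show (t' ≫ inv θ) ≫ pullback.snd g v = 𝟙 B
    rw [Category.assoc, ← hθ2, IsIso.inv_hom_id_assoc]
    exact pullback.lift_snd _ _ _
  have hft : f ≫ t = a := by
    rw [← cancel_mono θ]
    have htt : (f ≫ t) ≫ θ = f ≫ t' := by
      show (f ≫ t' ≫ inv θ) ≫ θ = f ≫ t'
      rw [Category.assoc, Category.assoc, IsIso.inv_hom_id, Category.comp_id]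
    rw [htt]
    apply pullback.hom_ext
    · rw [Category.assoc, Category.assoc, pullback.lift_fst, hθ1, cokernel.condition,
        cokernel.condition_assoc, zero_comp]
    · rw [Category.assoc, Category.assoc, pullback.lift_snd, hθ2, Category.comp_id, ha2]
  refine ⟨t ≫ pullback.fst g v, ?_, ?_⟩
  · rw [← Category.assoc, hft, ha1]
  · rw [Category.assoc, pullback.condition, ← Category.assoc, ht_snd, Category.id_comp]
end

section
/- Let C be an abelian category and A a class of objects of C. If g : X → Y is an epimorphism such that every monomorphism f whose cokernel is isomorphic to an object of A has the left lifting property with respect to g, then Ext¹_C(A, ker g) = 0 for every A ∈ A. Dually, if B is a class of objects and f is a monomorphism which has the left lifting property with respect to every epimorphism whose kernel is isomorphic to an object of B, then Ext¹_C(coker f, B) = 0 for every B ∈ B. -/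
open CategoryTheory CategoryTheory.Limits

universe v u

variable {C : Type u} [Category.{v} C] [Abelian C]

/-- `f` has the left lifting property with respect to `g`. -/
def LLP {A B X Y : C} (f : A ⟶ B) (g : X ⟶ Y) : Prop :=
  ∀ (u : A ⟶ X) (v : B ⟶ Y), u ≫ g = f ≫ v → ∃ h : B ⟶ X, f ≫ h = u ∧ h ≫ g = v

/-- Let `C` be an abelian category.  (1) If `𝓐` is a class of objects and `g : X → Y`
is an epimorphism such that every monomorphism whose cokernel is isomorphic to an
object of `𝓐` has the left lifting property with respect to `g`, then
`Ext¹_C(A, ker g) = 0` for every `A ∈ 𝓐`.  (2) Dually, if `𝓑` is a class of objects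
and `f` is a monomorphism which has the left lifting property with respect to every
epimorphism whose kernel is isomorphic to an object of `𝓑`, then
`Ext¹_C(coker f, B) = 0` for every `B ∈ 𝓑`. -/
theorem stmt_6 :
    (∀ (𝓐 : Set C) (X Y : C) (g : X ⟶ Y), Epi g →
      (∀ (Z W : C) (f : Z ⟶ W), Mono f →
        (∃ A ∈ 𝓐, Nonempty (cokernel f ≅ A)) → LLP f g) →
      ∀ A ∈ 𝓐, Ext1Zero A (kernel g)) ∧
    (∀ (𝓑 : Set C) (Z W : C) (f : Z ⟶ W), Mono f →
      (∀ (X Y : C) (g : X ⟶ Y), Epi g →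
        (∃ B ∈ 𝓑, Nonempty (kernel g ≅ B)) → LLP f g) →
      ∀ B ∈ 𝓑, Ext1Zero (cokernel f) B) := by
  constructor
  · intro 𝓐 X Y g hg hLLP A hA E i p w hSE
    haveI := hSE.mono_f
    haveI := hSE.epi_g
    have hiso : ∃ A' ∈ 𝓐, Nonempty (cokernel i ≅ A') :=
      ⟨A, hA, ⟨IsColimit.coconePointUniqueUpToIso (cokernelIsCokernel i) hSE.gIsCokernel⟩⟩
    obtain ⟨h, hh1, hh2⟩ := hLLP _ _ i hSE.mono_f hiso (kernel.ι g) 0 (by simp)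
    have hr : i ≫ kernel.lift g h hh2 = 𝟙 (kernel g) := by
      rw [← cancel_mono (kernel.ι g)]
      simp [hh1]
    exact ⟨(ShortComplex.Splitting.ofExactOfRetraction _ hSE.exact _ hr hSE.epi_g).s,
      (ShortComplex.Splitting.ofExactOfRetraction _ hSE.exact _ hr hSE.epi_g).s_g⟩
  · intro 𝓑 Z W f hf hLLP B hB E i p w hSE
    haveI := hSE.mono_f
    haveI := hSE.epi_g
    have hiso : ∃ B' ∈ 𝓑, Nonempty (kernel p ≅ B') :=
      ⟨B, hB, ⟨IsLimit.conePointUniqueUpToIso (kernelIsKernel p) hSE.fIsKernel⟩⟩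
    obtain ⟨h, hh1, hh2⟩ := hLLP _ _ p hSE.epi_g hiso 0 (cokernel.π f) (by simp)
    refine ⟨cokernel.desc f h hh1, ?_⟩
    rw [← cancel_epi (cokernel.π f)]
    simp [hh2]
end

section
/- Let C be an abelian category and (𝒞, 𝒲, 𝓕) a triple of classes of objects of C such that: 𝒲 is closed under direct summands and has the 2-out-of-3 property for short exact sequences (if 0 → X → Y → Z → 0 is exact and two of X, Y, Z lie in 𝒲, so does the third), and both (𝒞, 𝒲 ∩ 𝓕) and (𝒞 ∩ 𝒲, 𝓕) are complete cotorsion pairs in C. Let W be the class of morphisms w which can be written as w = p ∘ i with i a monomorphism whose cokernel lies in 𝒲 and p an epimorphism whose kernel lies in 𝒲. Then W is closed under retracts in the arrow category of C and satisfies the 2-out-of-3 property for composition: whenever f, g are composable morphisms and two of f, g, g∘f lie in W, so does the third. -/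
open CategoryTheory CategoryTheory.Limits

universe v u

variable {C : Type u} [Category.{v} C] [Abelian C]

/-- The class `𝒲` is closed under direct summands (equivalently, retracts). -/
def SummandClosed (𝒲 : Set C) : Prop :=
  ∀ (X W : C), W ∈ 𝒲 → (∃ (s : X ⟶ W) (r : W ⟶ X), s ≫ r = 𝟙 X) → X ∈ 𝒲

/-- The class `𝒲` has the 2-out-of-3 property for short exact sequences. -/
def TwoOutOfThreeSES (𝒲 : Set C) : Prop :=
  ∀ (X Y Z : C) (i : X ⟶ Y) (p : Y ⟶ Z) (w : i ≫ p = 0),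
    (ShortComplex.mk i p w).ShortExact →
      (X ∈ 𝒲 → Y ∈ 𝒲 → Z ∈ 𝒲) ∧ (X ∈ 𝒲 → Z ∈ 𝒲 → Y ∈ 𝒲) ∧ (Y ∈ 𝒲 → Z ∈ 𝒲 → X ∈ 𝒲)

/-- The class of weak equivalences associated to a class of trivial objects `𝒲`:
morphisms of the form `p ∘ i`, where `i` is a monomorphism with cokernel in `𝒲` and
`p` is an epimorphism with kernel in `𝒲`. -/
def Weq (𝒲 : Set C) {X Y : C} (h : X ⟶ Y) : Prop :=
  ∃ (Z : C) (i : X ⟶ Z) (p : Z ⟶ Y),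
    i ≫ p = h ∧ Mono i ∧ cokernel i ∈ 𝒲 ∧ Epi p ∧ kernel p ∈ 𝒲


namespace Stmt7Aux

open CategoryTheory.Preadditive

variable {C : Type u} [Category.{v} C] [Abelian C]

theorem shortExact_of_mono' {X Y : C} (i : X ⟶ Y) [Mono i] :
    (ShortComplex.mk i (cokernel.π i) (cokernel.condition i)).ShortExact :=
  { exact := CategoryTheory.ShortComplex.exact_cokernel i }

theorem shortExact_of_epi' {X Y : C} (p : X ⟶ Y) [Epi p] :
    (ShortComplex.mk (kernel.ι p) p (kernel.condition p)).ShortExact :=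
  { exact := CategoryTheory.ShortComplex.exact_kernel p }

noncomputable def cokerIso {S : ShortComplex C} (hS : S.ShortExact) :
    cokernel S.f ≅ S.X₃ :=
  IsColimit.coconePointUniqueUpToIso (cokernelIsCokernel S.f) hS.gIsCokernel

noncomputable def kerIso {S : ShortComplex C} (hS : S.ShortExact) :
    kernel S.g ≅ S.X₁ :=
  IsLimit.conePointUniqueUpToIso (kernelIsKernel S.g) hS.fIsKernel

theorem ext1Zero_of_iso {A A' B B' : C} (eA : A' ≅ A) (eB : B' ≅ B)
    (h : Ext1Zero A B) : Ext1Zero A' B' := by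
  intro E i p w hse
  have w' : (eB.inv ≫ i) ≫ p ≫ eA.hom = 0 := by
    rw [Category.assoc, ← Category.assoc i, w, zero_comp, comp_zero]
  have hse' : (ShortComplex.mk (eB.inv ≫ i) (p ≫ eA.hom) w').ShortExact := by
    refine ShortComplex.shortExact_of_iso ?_ hse
    exact ShortComplex.isoMk eB (Iso.refl E) eA (by simp) (by simp)
  obtain ⟨s, hs⟩ := h E (eB.inv ≫ i) (p ≫ eA.hom) w' hse'
  refine ⟨eA.hom ≫ s, ?_⟩
  have h2 : s ≫ p = eA.inv := by
    have := hs =≫ eA.inv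
    simpa using this
  rw [Category.assoc, h2, eA.hom_inv_id]

/-- SES `0 → coker u → coker (u ≫ v) → coker v → 0` for composable monos. -/
theorem cokerCompSES {X Y Z : C} (u : X ⟶ Y) (v : Y ⟶ Z) [Mono u] [Mono v] :
    ∃ (a : cokernel u ⟶ cokernel (u ≫ v)) (b : cokernel (u ≫ v) ⟶ cokernel v)
      (w : a ≫ b = 0), (ShortComplex.mk a b w).ShortExact := by
  have wa : u ≫ v ≫ cokernel.π (u ≫ v) = 0 := by
    rw [← Category.assoc, cokernel.condition]
  have wb : (u ≫ v) ≫ cokernel.π v = 0 := by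
    rw [Category.assoc, cokernel.condition, comp_zero]
  refine ⟨cokernel.desc u (v ≫ cokernel.π (u ≫ v)) wa,
    cokernel.desc (u ≫ v) (cokernel.π v) wb, ?_, ?_⟩
  · apply coequalizer.hom_ext
    simp
  · refine ShortComplex.ShortExact.mk' ?_ ?_ ?_
    · -- exactness in the middle
      rw [ShortComplex.exact_iff_exact_up_to_refinements]
      intro T x₂ hx₂
      dsimp at x₂ hx₂ ⊢
      obtain ⟨T', π, hπ, z, hz⟩ :=
        surjective_up_to_refinements_of_epi (cokernel.π (u ≫ v)) x₂
      have h1 : z ≫ cokernel.π v = 0 := by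
        calc z ≫ cokernel.π v
            = z ≫ cokernel.π (u ≫ v) ≫ cokernel.desc (u ≫ v) (cokernel.π v) wb := by simp
          _ = (z ≫ cokernel.π (u ≫ v)) ≫ cokernel.desc (u ≫ v) (cokernel.π v) wb := by
              simp only [Category.assoc]
          _ = (π ≫ x₂) ≫ cokernel.desc (u ≫ v) (cokernel.π v) wb := by rw [hz]
          _ = π ≫ (x₂ ≫ cokernel.desc (u ≫ v) (cokernel.π v) wb) := by simp only [Category.assoc]
          _ = 0 := by rw [hx₂, comp_zero]
      obtain ⟨T'', π', hπ', y, hy⟩ :=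
        ((shortExact_of_mono' v).exact.exact_up_to_refinements z h1)
      dsimp at hy
      refine ⟨T'', π' ≫ π, epi_comp _ _, y ≫ cokernel.π u, ?_⟩
      calc (π' ≫ π) ≫ x₂ = π' ≫ (π ≫ x₂) := by simp only [Category.assoc]
        _ = π' ≫ z ≫ cokernel.π (u ≫ v) := by rw [hz]
        _ = (π' ≫ z) ≫ cokernel.π (u ≫ v) := by simp only [Category.assoc]
        _ = (y ≫ v) ≫ cokernel.π (u ≫ v) := by rw [hy]
        _ = y ≫ (v ≫ cokernel.π (u ≫ v)) := by simp only [Category.assoc]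
        _ = (y ≫ cokernel.π u) ≫ cokernel.desc u (v ≫ cokernel.π (u ≫ v)) wa := by simp
    · -- mono
      apply mono_of_cancel_zero
      intro T g hg
      dsimp at hg
      obtain ⟨T', π, hπ, y, hy⟩ :=
        surjective_up_to_refinements_of_epi (cokernel.π u) g
      have h1 : (y ≫ v) ≫ cokernel.π (u ≫ v) = 0 := by
        calc (y ≫ v) ≫ cokernel.π (u ≫ v)
            = y ≫ (v ≫ cokernel.π (u ≫ v)) := by simp only [Category.assoc]
          _ = y ≫ cokernel.π u ≫ cokernel.desc u (v ≫ cokernel.π (u ≫ v)) wa := by simp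
          _ = (y ≫ cokernel.π u) ≫ cokernel.desc u (v ≫ cokernel.π (u ≫ v)) wa := by
              simp only [Category.assoc]
          _ = (π ≫ g) ≫ cokernel.desc u (v ≫ cokernel.π (u ≫ v)) wa := by rw [hy]
          _ = π ≫ (g ≫ cokernel.desc u (v ≫ cokernel.π (u ≫ v)) wa) := by simp only [Category.assoc]
          _ = 0 := by rw [hg, comp_zero]
      obtain ⟨T'', π', hπ', x, hx⟩ :=
        ((shortExact_of_mono' (u ≫ v)).exact.exact_up_to_refinements (y ≫ v) h1)
      dsimp at hx
      have hyx : π' ≫ y = x ≫ u := by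
        rw [← cancel_mono v]
        rw [Category.assoc, Category.assoc]
        exact hx
      have h2 : (π' ≫ π) ≫ g = 0 := by
        calc (π' ≫ π) ≫ g = π' ≫ (π ≫ g) := by simp only [Category.assoc]
          _ = π' ≫ (y ≫ cokernel.π u) := by rw [hy]
          _ = (π' ≫ y) ≫ cokernel.π u := by simp only [Category.assoc]
          _ = (x ≫ u) ≫ cokernel.π u := by rw [hyx]
          _ = x ≫ (u ≫ cokernel.π u) := by simp only [Category.assoc]
          _ = 0 := by rw [cokernel.condition, comp_zero]
      haveI := hπ; haveI := hπ'
      haveI : Epi (π' ≫ π) := epi_comp _ _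
      exact zero_of_epi_comp (π' ≫ π) h2
    · -- epi
      have h3 : cokernel.π (u ≫ v) ≫ cokernel.desc (u ≫ v) (cokernel.π v) wb
          = cokernel.π v := by simp
      exact epi_of_epi_fac h3

/-- SES `0 → ker p → ker (p ≫ q) → ker q → 0` for composable epis. -/
theorem kerCompSES {X Y Z : C} (p : X ⟶ Y) (q : Y ⟶ Z) [Epi p] [Epi q] :
    ∃ (a : kernel p ⟶ kernel (p ≫ q)) (b : kernel (p ≫ q) ⟶ kernel q)
      (w : a ≫ b = 0), (ShortComplex.mk a b w).ShortExact := by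
  have wa : kernel.ι p ≫ p ≫ q = 0 := by
    rw [← Category.assoc, kernel.condition, zero_comp]
  have wb : (kernel.ι (p ≫ q) ≫ p) ≫ q = 0 := by
    rw [Category.assoc, kernel.condition]
  refine ⟨kernel.lift (p ≫ q) (kernel.ι p) wa, kernel.lift q (kernel.ι (p ≫ q) ≫ p) wb,
    ?_, ?_⟩
  · apply equalizer.hom_ext
    simp
  · refine ShortComplex.ShortExact.mk' ?_ ?_ ?_
    · -- exactness in the middle
      rw [ShortComplex.exact_iff_exact_up_to_refinements]
      intro T x₂ hx₂
      dsimp at x₂ hx₂ ⊢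
      have h1 : (x₂ ≫ kernel.ι (p ≫ q)) ≫ p = 0 := by
        calc (x₂ ≫ kernel.ι (p ≫ q)) ≫ p = x₂ ≫ (kernel.ι (p ≫ q) ≫ p) := by simp only [Category.assoc]
          _ = x₂ ≫ (kernel.lift q (kernel.ι (p ≫ q) ≫ p) wb ≫ kernel.ι q) := by simp
          _ = (x₂ ≫ kernel.lift q (kernel.ι (p ≫ q) ≫ p) wb) ≫ kernel.ι q := by
              simp only [Category.assoc]
          _ = 0 := by rw [hx₂, zero_comp]
      obtain ⟨T', π, hπ, x₁, hx₁⟩ :=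
        ((shortExact_of_epi' p).exact.exact_up_to_refinements (x₂ ≫ kernel.ι (p ≫ q)) h1)
      dsimp at hx₁
      refine ⟨T', π, hπ, x₁, ?_⟩
      rw [← cancel_mono (kernel.ι (p ≫ q))]
      calc (π ≫ x₂) ≫ kernel.ι (p ≫ q) = π ≫ (x₂ ≫ kernel.ι (p ≫ q)) := by simp only [Category.assoc]
        _ = x₁ ≫ kernel.ι p := hx₁
        _ = x₁ ≫ (kernel.lift (p ≫ q) (kernel.ι p) wa ≫ kernel.ι (p ≫ q)) := by simp
        _ = (x₁ ≫ kernel.lift (p ≫ q) (kernel.ι p) wa) ≫ kernel.ι (p ≫ q) := by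
            simp only [Category.assoc]
    · -- mono
      have h3 : kernel.lift (p ≫ q) (kernel.ι p) wa ≫ kernel.ι (p ≫ q) = kernel.ι p := by simp
      exact mono_of_mono_fac h3
    · -- epi
      rw [epi_iff_surjective_up_to_refinements]
      intro T y
      obtain ⟨T', π, hπ, x, hx⟩ :=
        surjective_up_to_refinements_of_epi p (y ≫ kernel.ι q)
      have hx2 : x ≫ p ≫ q = 0 := by
        have h4 := hx =≫ q
        simp only [Category.assoc, kernel.condition, comp_zero] at h4
        exact h4.symm
      refine ⟨T', π, hπ, kernel.lift (p ≫ q) x hx2, ?_⟩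
      rw [← cancel_mono (kernel.ι q)]
      dsimp
      calc (π ≫ y) ≫ kernel.ι q = π ≫ y ≫ kernel.ι q := by simp only [Category.assoc]
        _ = x ≫ p := hx
        _ = kernel.lift (p ≫ q) x hx2 ≫ (kernel.ι (p ≫ q) ≫ p) := by simp
        _ = (kernel.lift (p ≫ q) x hx2 ≫ kernel.ι (p ≫ q)) ≫ p := by simp only [Category.assoc]
        _ = (kernel.lift (p ≫ q) x hx2 ≫ kernel.lift q (kernel.ι (p ≫ q) ≫ p) wb) ≫ kernel.ι q
            := by simp
      

/-- SES `0 → ker u → coker m → coker (m ≫ u) → 0` when `m` mono, `u` epi, `m ≫ u` mono. -/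
theorem mixedSES₁ {M G B : C} (m : M ⟶ G) (u : G ⟶ B) [Mono m] [Epi u] [Mono (m ≫ u)] :
    ∃ (a : kernel u ⟶ cokernel m) (b : cokernel m ⟶ cokernel (m ≫ u))
      (w : a ≫ b = 0), (ShortComplex.mk a b w).ShortExact := by
  have wb : m ≫ u ≫ cokernel.π (m ≫ u) = 0 := by
    rw [← Category.assoc, cokernel.condition]
  refine ⟨kernel.ι u ≫ cokernel.π m, cokernel.desc m (u ≫ cokernel.π (m ≫ u)) wb, ?_, ?_⟩
  · simp only [Category.assoc, cokernel.π_desc]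
    rw [← Category.assoc, kernel.condition, zero_comp]
  · refine ShortComplex.ShortExact.mk' ?_ ?_ ?_
    · -- exact
      rw [ShortComplex.exact_iff_exact_up_to_refinements]
      intro T x₂ hx₂
      dsimp at x₂ hx₂ ⊢
      obtain ⟨T', π, hπ, y, hy⟩ := surjective_up_to_refinements_of_epi (cokernel.π m) x₂
      have h1 : (y ≫ u) ≫ cokernel.π (m ≫ u) = 0 := by
        have h2 := hy =≫ cokernel.desc m (u ≫ cokernel.π (m ≫ u)) wb
        simp only [Category.assoc, cokernel.π_desc] at h2
        rw [hx₂, comp_zero] at h2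
        rw [Category.assoc]
        exact h2.symm
      obtain ⟨T'', π', hπ', α, hα⟩ :=
        ((shortExact_of_mono' (m ≫ u)).exact.exact_up_to_refinements (y ≫ u) h1)
      dsimp at hα
      have h3 : (π' ≫ y - α ≫ m) ≫ u = 0 := by
        rw [sub_comp, sub_eq_zero, Category.assoc, Category.assoc]
        exact hα
      refine ⟨T'', π' ≫ π, epi_comp _ _, kernel.lift u (π' ≫ y - α ≫ m) h3, ?_⟩
      have h4 : kernel.lift u (π' ≫ y - α ≫ m) h3 ≫ kernel.ι u ≫ cokernel.π m
          = (π' ≫ y - α ≫ m) ≫ cokernel.π m := by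
        rw [← Category.assoc, kernel.lift_ι]
      rw [h4]
      simp only [sub_comp, Category.assoc]
      rw [cokernel.condition, comp_zero, sub_zero, hy, ← Category.assoc]
    · -- mono
      apply mono_of_cancel_zero
      intro T t ht
      obtain ⟨T', π, hπ, α, hα⟩ :=
        ((shortExact_of_mono' m).exact.exact_up_to_refinements (t ≫ kernel.ι u)
          (by simpa only [Category.assoc] using ht))
      dsimp at hα
      have h5 : α ≫ m ≫ u = 0 := by
        rw [← Category.assoc, ← hα]
        simp only [Category.assoc, kernel.condition, comp_zero]
      have h6 : α = 0 := by
        have := zero_of_comp_mono (m ≫ u) (by rw [← Category.assoc] at h5 ⊢; exact h5)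
        exact this
      have h7 : π ≫ t ≫ kernel.ι u = 0 := by rw [hα, h6, zero_comp]
      have h8 : t ≫ kernel.ι u = 0 := zero_of_epi_comp π (by rw [← Category.assoc] at h7 ⊢; exact h7)
      exact zero_of_comp_mono (kernel.ι u) h8
    · -- epi
      have h9 : cokernel.π m ≫ cokernel.desc m (u ≫ cokernel.π (m ≫ u)) wb
          = u ≫ cokernel.π (m ≫ u) := by simp
      haveI : Epi (u ≫ cokernel.π (m ≫ u)) := epi_comp _ _
      exact epi_of_epi_fac h9

/-- SES `0 → ker (m ≫ u) → ker u → coker m → 0` when `m` mono, `u` epi, `m ≫ u` epi. -/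
theorem mixedSES₂ {M G B : C} (m : M ⟶ G) (u : G ⟶ B) [Mono m] [Epi u] [Epi (m ≫ u)] :
    ∃ (a : kernel (m ≫ u) ⟶ kernel u) (b : kernel u ⟶ cokernel m)
      (w : a ≫ b = 0), (ShortComplex.mk a b w).ShortExact := by
  have wa : (kernel.ι (m ≫ u) ≫ m) ≫ u = 0 := by
    rw [Category.assoc, kernel.condition]
  refine ⟨kernel.lift u (kernel.ι (m ≫ u) ≫ m) wa, kernel.ι u ≫ cokernel.π m, ?_, ?_⟩
  · rw [← Category.assoc, kernel.lift_ι, Category.assoc, cokernel.condition, comp_zero]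
  · refine ShortComplex.ShortExact.mk' ?_ ?_ ?_
    · -- exact
      rw [ShortComplex.exact_iff_exact_up_to_refinements]
      intro T x₂ hx₂
      dsimp at x₂ hx₂ ⊢
      obtain ⟨T', π, hπ, α, hα⟩ :=
        ((shortExact_of_mono' m).exact.exact_up_to_refinements (x₂ ≫ kernel.ι u)
          (by simpa only [Category.assoc] using hx₂))
      dsimp at hα
      have h1 : α ≫ m ≫ u = 0 := by
        rw [← Category.assoc, ← hα]
        simp only [Category.assoc, kernel.condition, comp_zero]
      refine ⟨T', π, hπ, kernel.lift (m ≫ u) α h1, ?_⟩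
      rw [← cancel_mono (kernel.ι u)]
      have h2 : (kernel.lift (m ≫ u) α h1 ≫ kernel.lift u (kernel.ι (m ≫ u) ≫ m) wa) ≫ kernel.ι u
          = α ≫ m := by
        simp only [Category.assoc, kernel.lift_ι, kernel.lift_ι_assoc]
      rw [h2]
      simpa only [Category.assoc] using hα
    · -- mono
      have h3 : kernel.lift u (kernel.ι (m ≫ u) ≫ m) wa ≫ kernel.ι u
          = kernel.ι (m ≫ u) ≫ m := kernel.lift_ι _ _ _
      haveI : Mono (kernel.ι (m ≫ u) ≫ m) := mono_comp _ _
      exact mono_of_mono_fac h3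
    · -- epi
      rw [epi_iff_surjective_up_to_refinements]
      intro T y
      obtain ⟨T', π, hπ, g, hg⟩ := surjective_up_to_refinements_of_epi (cokernel.π m) y
      obtain ⟨T'', π', hπ', x, hx⟩ := surjective_up_to_refinements_of_epi (m ≫ u) (g ≫ u)
      have h4 : (π' ≫ g - x ≫ m) ≫ u = 0 := by
        rw [sub_comp, sub_eq_zero, Category.assoc, Category.assoc]
        exact hx
      refine ⟨T'', π' ≫ π, epi_comp _ _, kernel.lift u (π' ≫ g - x ≫ m) h4, ?_⟩
      have h5 : kernel.lift u (π' ≫ g - x ≫ m) h4 ≫ kernel.ι u ≫ cokernel.π m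
          = (π' ≫ g - x ≫ m) ≫ cokernel.π m := by
        rw [← Category.assoc, kernel.lift_ι]
      calc (π' ≫ π) ≫ y = π' ≫ π ≫ y := by simp only [Category.assoc]
        _ = π' ≫ g ≫ cokernel.π m := by rw [hg]
        _ = (π' ≫ g) ≫ cokernel.π m - (x ≫ m) ≫ cokernel.π m := by
            rw [Category.assoc x m, cokernel.condition, comp_zero, sub_zero, Category.assoc]
        _ = (π' ≫ g - x ≫ m) ≫ cokernel.π m := by rw [sub_comp]
        _ = kernel.lift u (π' ≫ g - x ≫ m) h4 ≫ kernel.ι u ≫ cokernel.π m := h5.symm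

section PushPull

variable {A E M : C} (f : A ⟶ E) (g : A ⟶ M)

/-- `coker (pushout.inr f g) ≅ coker f`. -/
noncomputable def cokerInrIso : cokernel (pushout.inr f g) ≅ cokernel f where
  hom := cokernel.desc _ (pushout.desc (cokernel.π f) 0
      (by rw [cokernel.condition, comp_zero])) (by simp [pushout.inl_desc, pushout.inr_desc, pushout.inl_desc_assoc, pushout.inr_desc_assoc, pullback.lift_fst, pullback.lift_snd, pullback.lift_fst_assoc, pullback.lift_snd_assoc])
  inv := cokernel.desc f (pushout.inl f g ≫ cokernel.π (pushout.inr f g))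
      (by rw [← Category.assoc, pushout.condition, Category.assoc,
        cokernel.condition, comp_zero])
  hom_inv_id := by
    apply coequalizer.hom_ext
    simp only [cokernel.π_desc_assoc, Category.comp_id]
    apply pushout.hom_ext <;> simp [pushout.inl_desc, pushout.inr_desc, pushout.inl_desc_assoc, pushout.inr_desc_assoc, pullback.lift_fst, pullback.lift_snd, pullback.lift_fst_assoc, pullback.lift_snd_assoc]
  inv_hom_id := by
    apply coequalizer.hom_ext
    simp [pushout.inl_desc, pushout.inr_desc, pushout.inl_desc_assoc, pushout.inr_desc_assoc, pullback.lift_fst, pullback.lift_snd, pullback.lift_fst_assoc, pullback.lift_snd_assoc]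

/-- `coker (pushout.inl f g) ≅ coker g`. -/
noncomputable def cokerInlIso : cokernel (pushout.inl f g) ≅ cokernel g where
  hom := cokernel.desc _ (pushout.desc 0 (cokernel.π g)
      (by rw [cokernel.condition, comp_zero])) (by simp [pushout.inl_desc, pushout.inr_desc, pushout.inl_desc_assoc, pushout.inr_desc_assoc, pullback.lift_fst, pullback.lift_snd, pullback.lift_fst_assoc, pullback.lift_snd_assoc])
  inv := cokernel.desc g (pushout.inr f g ≫ cokernel.π (pushout.inl f g))
      (by rw [← Category.assoc, ← pushout.condition, Category.assoc,
        cokernel.condition, comp_zero])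
  hom_inv_id := by
    apply coequalizer.hom_ext
    simp only [cokernel.π_desc_assoc, Category.comp_id]
    apply pushout.hom_ext <;> simp [pushout.inl_desc, pushout.inr_desc, pushout.inl_desc_assoc, pushout.inr_desc_assoc, pullback.lift_fst, pullback.lift_snd, pullback.lift_fst_assoc, pullback.lift_snd_assoc]
  inv_hom_id := by
    apply coequalizer.hom_ext
    simp [pushout.inl_desc, pushout.inr_desc, pushout.inl_desc_assoc, pushout.inr_desc_assoc, pullback.lift_fst, pullback.lift_snd, pullback.lift_fst_assoc, pullback.lift_snd_assoc]

/-- When `f` is mono, `ker (pushout.inl f g) ≅ ker g`. -/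
noncomputable def kerInlIso [Mono f] : kernel (pushout.inl f g) ≅ kernel g := by
  have w1 : (kernel.ι g ≫ f) ≫ pushout.inl f g = 0 := by
    rw [Category.assoc, pushout.condition, ← Category.assoc, kernel.condition, zero_comp]
  let k' : kernel g ⟶ kernel (pushout.inl f g) := kernel.lift _ (kernel.ι g ≫ f) w1
  haveI hm : Mono k' := by
    haveI : Mono (kernel.ι g ≫ f) := mono_comp _ _
    exact mono_of_mono_fac (kernel.lift_ι _ _ _)
  haveI he : Epi k' := by
    rw [epi_iff_surjective_up_to_refinements]
    intro T y
    have hbt : (biprod.lift f (-g)) ≫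
        Abelian.BiproductToPushoutIsCokernel.biproductToPushout f g = 0 := by
      rw [biprod.lift_desc, neg_comp, pushout.condition, add_neg_cancel]
    haveI : Epi (Abelian.BiproductToPushoutIsCokernel.biproductToPushout f g) :=
      epi_of_isColimit_cofork (Abelian.BiproductToPushoutIsCokernel.isColimitBiproductToPushout f g)
    have hexact : (ShortComplex.mk _ _ hbt).Exact :=
      ShortComplex.exact_of_g_is_cokernel _
        (Abelian.BiproductToPushoutIsCokernel.isColimitBiproductToPushout f g)
    have h0 : (biprod.lift (y ≫ kernel.ι (pushout.inl f g)) 0) ≫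
        Abelian.BiproductToPushoutIsCokernel.biproductToPushout f g = 0 := by
      rw [biprod.lift_desc, zero_comp, add_zero, Category.assoc, kernel.condition, comp_zero]
    obtain ⟨T', π, hπ, α, hα⟩ := hexact.exact_up_to_refinements _ h0
    dsimp at hα
    have hαf : π ≫ y ≫ kernel.ι (pushout.inl f g) = α ≫ f := by
      have := hα =≫ biprod.fst
      simpa using this
    have hαg : α ≫ g = 0 := by
      have h' := hα =≫ biprod.snd
      simp at h'
      first
      | exact h'.symm
      | exact h'
    refine ⟨T', π, hπ, kernel.lift g α hαg, ?_⟩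
    rw [← cancel_mono (kernel.ι (pushout.inl f g))]
    have hth : (kernel.lift g α hαg ≫ k') ≫ kernel.ι (pushout.inl f g) = α ≫ f := by
      simp only [k', Category.assoc, kernel.lift_ι, kernel.lift_ι_assoc]
    rw [hth, Category.assoc]
    exact hαf
  haveI : IsIso k' := isIso_of_mono_of_epi k'
  exact (asIso k').symm

end PushPull

section Pull

variable {X Y Z : C} (f : X ⟶ Z) (g : Y ⟶ Z)

/-- `ker (pullback.snd f g) ≅ ker f`. -/
noncomputable def kerSndIso : kernel (pullback.snd f g) ≅ kernel f where
  hom := kernel.lift f (kernel.ι _ ≫ pullback.fst f g)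
      (by rw [Category.assoc, pullback.condition, ← Category.assoc,
        kernel.condition, zero_comp])
  inv := kernel.lift _ (pullback.lift (kernel.ι f) 0
      (by rw [kernel.condition, zero_comp])) (by simp [pushout.inl_desc, pushout.inr_desc, pushout.inl_desc_assoc, pushout.inr_desc_assoc, pullback.lift_fst, pullback.lift_snd, pullback.lift_fst_assoc, pullback.lift_snd_assoc])
  hom_inv_id := by
    rw [← cancel_mono (kernel.ι (pullback.snd f g))]
    simp only [Category.assoc, kernel.lift_ι, Category.id_comp]
    apply pullback.hom_ext
    · simp [pushout.inl_desc, pushout.inr_desc, pushout.inl_desc_assoc, pushout.inr_desc_assoc, pullback.lift_fst, pullback.lift_snd, pullback.lift_fst_assoc, pullback.lift_snd_assoc]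
    · simp [pushout.inl_desc, pushout.inr_desc, pushout.inl_desc_assoc, pushout.inr_desc_assoc, pullback.lift_fst, pullback.lift_snd, pullback.lift_fst_assoc, pullback.lift_snd_assoc, kernel.condition]
  inv_hom_id := by
    rw [← cancel_mono (kernel.ι f)]
    simp [pushout.inl_desc, pushout.inr_desc, pushout.inl_desc_assoc, pushout.inr_desc_assoc, pullback.lift_fst, pullback.lift_snd, pullback.lift_fst_assoc, pullback.lift_snd_assoc]

/-- `ker (pullback.fst f g) ≅ ker g`. -/
noncomputable def kerFstIso : kernel (pullback.fst f g) ≅ kernel g where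
  hom := kernel.lift g (kernel.ι _ ≫ pullback.snd f g)
      (by rw [Category.assoc, ← pullback.condition, ← Category.assoc,
        kernel.condition, zero_comp])
  inv := kernel.lift _ (pullback.lift 0 (kernel.ι g)
      (by rw [kernel.condition, zero_comp])) (by simp [pushout.inl_desc, pushout.inr_desc, pushout.inl_desc_assoc, pushout.inr_desc_assoc, pullback.lift_fst, pullback.lift_snd, pullback.lift_fst_assoc, pullback.lift_snd_assoc])
  hom_inv_id := by
    rw [← cancel_mono (kernel.ι (pullback.fst f g))]
    simp only [Category.assoc, kernel.lift_ι, Category.id_comp]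
    apply pullback.hom_ext
    · simp [pushout.inl_desc, pushout.inr_desc, pushout.inl_desc_assoc, pushout.inr_desc_assoc, pullback.lift_fst, pullback.lift_snd, pullback.lift_fst_assoc, pullback.lift_snd_assoc, kernel.condition]
    · simp [pushout.inl_desc, pushout.inr_desc, pushout.inl_desc_assoc, pushout.inr_desc_assoc, pullback.lift_fst, pullback.lift_snd, pullback.lift_fst_assoc, pullback.lift_snd_assoc]
  inv_hom_id := by
    rw [← cancel_mono (kernel.ι g)]
    simp [pushout.inl_desc, pushout.inr_desc, pushout.inl_desc_assoc, pushout.inr_desc_assoc, pullback.lift_fst, pullback.lift_snd, pullback.lift_fst_assoc, pullback.lift_snd_assoc]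

/-- When `f` is epi, `coker (pullback.fst f g) ≅ coker g`. -/
noncomputable def cokerFstIso [Epi f] : cokernel (pullback.fst f g) ≅ cokernel g := by
  have w1 : pullback.fst f g ≫ f ≫ cokernel.π g = 0 := by
    rw [← Category.assoc, pullback.condition, Category.assoc, cokernel.condition, comp_zero]
  let c' : cokernel (pullback.fst f g) ⟶ cokernel g :=
    cokernel.desc _ (f ≫ cokernel.π g) w1
  haveI hm : Mono c' := by
    apply mono_of_cancel_zero
    intro T t ht
    obtain ⟨T', π, hπ, x, hx⟩ :=
      surjective_up_to_refinements_of_epi (cokernel.π (pullback.fst f g)) t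
    have h1 : (x ≫ f) ≫ cokernel.π g = 0 := by
      have h2 := hx =≫ c'
      simp only [Category.assoc, cokernel.π_desc, c'] at h2
      rw [ht, comp_zero] at h2
      rw [Category.assoc]
      exact h2.symm
    obtain ⟨T'', π', hπ', y, hy⟩ :=
      ((CategoryTheory.ShortComplex.exact_cokernel g).exact_up_to_refinements (x ≫ f) h1)
    dsimp at hy
    have h3 : (π' ≫ π) ≫ t = 0 := by
      have h5 : π' ≫ x = pullback.lift (π' ≫ x) y
          (by rw [Category.assoc, hy]) ≫ pullback.fst f g := by simp [pushout.inl_desc, pushout.inr_desc, pushout.inl_desc_assoc, pushout.inr_desc_assoc, pullback.lift_fst, pullback.lift_snd, pullback.lift_fst_assoc, pullback.lift_snd_assoc]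
      calc (π' ≫ π) ≫ t = π' ≫ π ≫ t := by simp only [Category.assoc]
        _ = π' ≫ x ≫ cokernel.π (pullback.fst f g) := by rw [hx]
        _ = (π' ≫ x) ≫ cokernel.π (pullback.fst f g) := by simp only [Category.assoc]
        _ = (pullback.lift (π' ≫ x) y (by rw [Category.assoc, hy]) ≫ pullback.fst f g) ≫
              cokernel.π (pullback.fst f g) := by rw [← h5]
        _ = 0 := by
            rw [Category.assoc]
            simp only [cokernel.condition, comp_zero]
    haveI : Epi (π' ≫ π) := epi_comp _ _
    exact zero_of_epi_comp (π' ≫ π) h3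
  haveI he : Epi c' := by
    have h6 : cokernel.π (pullback.fst f g) ≫ c' = f ≫ cokernel.π g := by simp [c']
    haveI : Epi (f ≫ cokernel.π g) := epi_comp _ _
    exact epi_of_epi_fac h6
  haveI : IsIso c' := isIso_of_mono_of_epi c'
  exact asIso c'

end Pull


/-- The split SES `0 → X → X ⊞ Y → Y → 0`. -/
theorem biprodSES (X Y : C) :
    (ShortComplex.mk (biprod.inl : X ⟶ X ⊞ Y) (biprod.snd : X ⊞ Y ⟶ Y)
      (by simp)).ShortExact := by
  have spl : (ShortComplex.mk (biprod.inl : X ⟶ X ⊞ Y) (biprod.snd : X ⊞ Y ⟶ Y)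
      (by simp)).Splitting :=
    { r := biprod.fst
      s := biprod.inr
      f_r := by simp
      s_g := by simp
      id := by simp [biprod.total] }
  exact spl.shortExact

/-- Pushing out a SES `0 → K → M → N → 0` along `j : K ⟶ F` gives a SES
`0 → F → pushout j g → N → 0`. -/
theorem pushoutSES {K M N F : C} (g : K ⟶ M) (c : M ⟶ N) (w : g ≫ c = 0)
    (hS : (ShortComplex.mk g c w).ShortExact) (j : K ⟶ F) :
    ∃ (P : pushout j g ⟶ N) (w' : pushout.inl j g ≫ P = 0),
      pushout.inr j g ≫ P = c ∧ (ShortComplex.mk (pushout.inl j g) P w').ShortExact := by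
  haveI : Mono g := hS.mono_f
  haveI : Epi c := hS.epi_g
  refine ⟨pushout.desc 0 c (by rw [comp_zero, w]), by simp [pushout.inl_desc, pushout.inr_desc, pushout.inl_desc_assoc, pushout.inr_desc_assoc, pullback.lift_fst, pullback.lift_snd, pullback.lift_fst_assoc, pullback.lift_snd_assoc], by simp [pushout.inl_desc, pushout.inr_desc, pushout.inl_desc_assoc, pushout.inr_desc_assoc, pullback.lift_fst, pullback.lift_snd, pullback.lift_fst_assoc, pullback.lift_snd_assoc], ?_⟩
  refine ShortComplex.ShortExact.mk' ?_ ?_ ?_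
  · -- exact
    rw [ShortComplex.exact_iff_exact_up_to_refinements]
    intro T x₂ hx₂
    dsimp at x₂ hx₂ ⊢
    haveI : Epi (Abelian.BiproductToPushoutIsCokernel.biproductToPushout j g) :=
      epi_of_isColimit_cofork (Abelian.BiproductToPushoutIsCokernel.isColimitBiproductToPushout j g)
    obtain ⟨T', π, hπ, t, ht⟩ := surjective_up_to_refinements_of_epi
      (Abelian.BiproductToPushoutIsCokernel.biproductToPushout j g) x₂
    set y : T' ⟶ F := t ≫ biprod.fst with hy
    set m : T' ⟶ M := t ≫ biprod.snd with hm
    have hdec : π ≫ x₂ = y ≫ pushout.inl j g + m ≫ pushout.inr j g := by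
      rw [ht]
      have : (t : T' ⟶ F ⊞ M) = biprod.lift y m := by
        apply biprod.hom_ext <;> simp [hy, hm]
      rw [this]
      simp [Abelian.BiproductToPushoutIsCokernel.biproductToPushout]
    have hmc : m ≫ c = 0 := by
      have h2 := hdec =≫ pushout.desc 0 c (by rw [comp_zero, w])
      simp only [Category.assoc, add_comp, pushout.inl_desc, pushout.inr_desc, comp_zero,
        zero_add] at h2
      rw [hx₂, comp_zero] at h2
      exact h2.symm
    obtain ⟨T'', π', hπ', k, hk⟩ := hS.exact.exact_up_to_refinements m hmc
    dsimp at hk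
    refine ⟨T'', π' ≫ π, epi_comp _ _, π' ≫ y + k ≫ j, ?_⟩
    calc (π' ≫ π) ≫ x₂ = π' ≫ (π ≫ x₂) := by simp only [Category.assoc]
      _ = π' ≫ (y ≫ pushout.inl j g + m ≫ pushout.inr j g) := by rw [hdec]
      _ = (π' ≫ y) ≫ pushout.inl j g + (π' ≫ m) ≫ pushout.inr j g := by
          simp only [comp_add, Category.assoc]
      _ = (π' ≫ y) ≫ pushout.inl j g + (k ≫ g) ≫ pushout.inr j g := by rw [hk]
      _ = (π' ≫ y + k ≫ j) ≫ pushout.inl j g := by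
          rw [add_comp, Category.assoc k g (pushout.inr j g), ← pushout.condition]
          simp only [Category.assoc]
  · -- mono
    exact Abelian.mono_pushout_of_mono_g j g
  · -- epi
    have h3 : pushout.inr j g ≫ pushout.desc 0 c (by rw [comp_zero, w]) = c := by simp [pushout.inl_desc, pushout.inr_desc, pushout.inl_desc_assoc, pushout.inr_desc_assoc, pullback.lift_fst, pullback.lift_snd, pullback.lift_fst_assoc, pullback.lift_snd_assoc]
    exact epi_of_epi_fac h3

/-- `leftPerp` classes are closed under extensions. -/
theorem leftPerp_extension {S : Set C} {A₁ A₂ A₃ : C} (u : A₁ ⟶ A₂) (v : A₂ ⟶ A₃)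
    (wuv : u ≫ v = 0) (huv : (ShortComplex.mk u v wuv).ShortExact)
    (h₁ : A₁ ∈ leftPerp S) (h₃ : A₃ ∈ leftPerp S) : A₂ ∈ leftPerp S := by
  intro B hB E i p w hse
  haveI : Mono u := huv.mono_f
  haveI : Epi v := huv.epi_g
  haveI : Mono i := hse.mono_f
  haveI : Epi p := hse.epi_g
  -- Step 1: pull back `E` along `u` and split to lift `u` to `t : A₁ ⟶ E`.
  obtain ⟨t, ht⟩ : ∃ t : A₁ ⟶ E, t ≫ p = u := by
    have w1 : i ≫ p = 0 ≫ u := by rw [w, zero_comp]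
    have w' : pullback.lift i 0 w1 ≫ pullback.snd p u = 0 := by simp [pushout.inl_desc, pushout.inr_desc, pushout.inl_desc_assoc, pushout.inr_desc_assoc, pullback.lift_fst, pullback.lift_snd, pullback.lift_fst_assoc, pullback.lift_snd_assoc]
    have hse' : (ShortComplex.mk (pullback.lift i 0 w1) (pullback.snd p u) w').ShortExact := by
      refine ShortComplex.ShortExact.mk' ?_ ?_ ?_
      · rw [ShortComplex.exact_iff_exact_up_to_refinements]
        intro T x₂ hx₂
        dsimp at x₂ hx₂ ⊢
        have hker : (x₂ ≫ pullback.fst p u) ≫ p = 0 := by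
          rw [Category.assoc, pullback.condition, ← Category.assoc, hx₂, zero_comp]
        obtain ⟨β, hβ⟩ := KernelFork.IsLimit.lift' hse.fIsKernel (x₂ ≫ pullback.fst p u) hker
        refine ⟨T, 𝟙 T, inferInstance, β, ?_⟩
        rw [Category.id_comp]
        apply pullback.hom_ext
        · simp only [Category.assoc, pullback.lift_fst]
          exact hβ.symm
        · simp only [Category.assoc, pullback.lift_snd, comp_zero]
          exact hx₂
      · exact mono_of_mono_fac (pullback.lift_fst i 0 w1)
      · infer_instance
    obtain ⟨s₁, hs₁⟩ := h₁ B hB _ (pullback.lift i 0 w1) (pullback.snd p u) w' hse'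
    refine ⟨s₁ ≫ pullback.fst p u, ?_⟩
    rw [Category.assoc, pullback.condition, ← Category.assoc, hs₁, Category.id_comp]
  haveI : Mono t := mono_of_mono_fac ht
  -- Step 2: the quotient SES `0 → B → coker t → A₃ → 0` and its splitting.
  have wd : t ≫ p ≫ v = 0 := by rw [← Category.assoc, ht, wuv]
  have w₂ : (i ≫ cokernel.π t) ≫ cokernel.desc t (p ≫ v) wd = 0 := by
    simp only [Category.assoc, cokernel.π_desc]
    rw [← Category.assoc, w, zero_comp]
  have hse₂ : (ShortComplex.mk (i ≫ cokernel.π t) (cokernel.desc t (p ≫ v) wd) w₂).ShortExact := by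
    refine ShortComplex.ShortExact.mk' ?_ ?_ ?_
    · rw [ShortComplex.exact_iff_exact_up_to_refinements]
      intro T x₂ hx₂
      dsimp at x₂ hx₂ ⊢
      obtain ⟨T', π, hπ, e, he⟩ := surjective_up_to_refinements_of_epi (cokernel.π t) x₂
      have hev : (e ≫ p) ≫ v = 0 := by
        have h2 := he =≫ cokernel.desc t (p ≫ v) wd
        simp only [Category.assoc, cokernel.π_desc] at h2
        rw [hx₂, comp_zero] at h2
        rw [Category.assoc]
        exact h2.symm
      obtain ⟨T'', π', hπ', a₁, ha₁⟩ := huv.exact.exact_up_to_refinements (e ≫ p) hev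
      dsimp at ha₁
      have hker : (π' ≫ e - a₁ ≫ t) ≫ p = 0 := by
        rw [sub_comp, sub_eq_zero, Category.assoc, Category.assoc, ht]
        exact ha₁
      obtain ⟨β, hβ⟩ := KernelFork.IsLimit.lift' hse.fIsKernel (π' ≫ e - a₁ ≫ t) hker
      refine ⟨T'', π' ≫ π, epi_comp _ _, β, ?_⟩
      calc (π' ≫ π) ≫ x₂ = π' ≫ (π ≫ x₂) := by simp only [Category.assoc]
        _ = π' ≫ (e ≫ cokernel.π t) := by rw [he]
        _ = (π' ≫ e - a₁ ≫ t) ≫ cokernel.π t := by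
            rw [sub_comp, Category.assoc a₁ t, cokernel.condition, comp_zero, sub_zero,
              Category.assoc]
        _ = β ≫ i ≫ cokernel.π t := by
            rw [← hβ, Category.assoc]
            rfl
    · apply mono_of_cancel_zero
      intro T t₀ ht₀
      obtain ⟨T', π, hπ, α, hα⟩ :=
        ((shortExact_of_mono' t).exact.exact_up_to_refinements (t₀ ≫ i)
          (by simpa only [Category.assoc] using ht₀))
      dsimp at hα
      have hα0 : α = 0 := by
        apply zero_of_comp_mono u
        rw [← ht, ← Category.assoc, ← hα]
        simp only [Category.assoc, w, comp_zero]
      rw [hα0, zero_comp] at hα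
      have : t₀ ≫ i = 0 := zero_of_epi_comp π (by simpa only [Category.assoc] using hα)
      exact zero_of_comp_mono i this
    · have h3 : cokernel.π t ≫ cokernel.desc t (p ≫ v) wd = p ≫ v := by simp
      haveI : Epi (p ≫ v) := epi_comp _ _
      exact epi_of_epi_fac h3
  obtain ⟨s₃, hs₃⟩ := h₃ B hB _ (i ≫ cokernel.π t) (cokernel.desc t (p ≫ v) wd) w₂ hse₂
  -- convert the section into a retraction of `i ≫ π_t`, then a retraction of `i`,
  -- then a section of `p`.
  let spl₂ := ShortComplex.Splitting.ofExactOfSection _ hse₂.exact s₃ hs₃ hse₂.mono_f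
  have hir : i ≫ (cokernel.π t ≫ spl₂.r) = 𝟙 B := by
    rw [← Category.assoc]
    exact spl₂.f_r
  let spl := ShortComplex.Splitting.ofExactOfRetraction _ hse.exact (cokernel.π t ≫ spl₂.r)
    hir hse.epi_g
  exact ⟨spl.s, spl.s_g⟩

theorem mem_of_iso {𝒲 : Set C} (hsum : SummandClosed 𝒲) {X W : C} (e : X ≅ W)
    (hW : W ∈ 𝒲) : X ∈ 𝒲 :=
  hsum X W hW ⟨e.hom, e.inv, e.hom_inv_id⟩

theorem leftPerp_iso {S : Set C} {A A' : C} (e : A' ≅ A) (h : A ∈ leftPerp S) :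
    A' ∈ leftPerp S := fun B hB => ext1Zero_of_iso e (Iso.refl B) (h B hB)

theorem rightPerp_iso {S : Set C} {B B' : C} (e : B' ≅ B) (h : B ∈ rightPerp S) :
    B' ∈ rightPerp S := fun A hA => ext1Zero_of_iso (Iso.refl A) e (h A hA)

/-- The key lifting lemma: a mono `I` lifts against an epi `p` whenever
`Ext¹(coker I, ker p) = 0`. -/
theorem lifting {A E X Y : C} (I : A ⟶ E) (p : X ⟶ Y) [Mono I] [Epi p]
    (a : A ⟶ X) (b : E ⟶ Y) (hcomm : I ≫ b = a ≫ p)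
    (hext : Ext1Zero (cokernel I) (kernel p)) :
    ∃ l : E ⟶ X, I ≫ l = a ∧ l ≫ p = b := by
  -- the pullback `D` of `p` along `b`
  set D := pullback p b with hD
  set q : D ⟶ E := pullback.snd p b with hq
  haveI : Epi q := Abelian.epi_pullback_of_epi_f p b
  have hs₀w : a ≫ p = I ≫ b := hcomm.symm
  set s₀ : A ⟶ D := pullback.lift a I hs₀w with hs₀
  have hs₀fst : s₀ ≫ pullback.fst p b = a := pullback.lift_fst _ _ _
  have hs₀snd : s₀ ≫ q = I := pullback.lift_snd _ _ _
  haveI : Mono s₀ := mono_of_mono_fac hs₀snd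
  set ρ : D ⟶ cokernel s₀ := cokernel.π s₀ with hρ
  set κ : kernel q ⟶ cokernel s₀ := kernel.ι q ≫ ρ with hκ
  have wτ : s₀ ≫ q ≫ cokernel.π I = 0 := by
    rw [← Category.assoc, hs₀snd, cokernel.condition]
  set τ : cokernel s₀ ⟶ cokernel I := cokernel.desc s₀ (q ≫ cokernel.π I) wτ with hτ
  have hs₀ρ : s₀ ≫ ρ = 0 := cokernel.condition s₀
  have hρτ : ρ ≫ τ = q ≫ cokernel.π I := cokernel.π_desc _ _ _
  have wκτ : κ ≫ τ = 0 := by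
    rw [hκ, Category.assoc, hτ, cokernel.π_desc, ← Category.assoc, kernel.condition, zero_comp]
  have hSE : (ShortComplex.mk κ τ wκτ).ShortExact := by
    refine ShortComplex.ShortExact.mk' ?_ ?_ ?_
    · rw [ShortComplex.exact_iff_exact_up_to_refinements]
      intro T x₂ hx₂
      dsimp at x₂ hx₂ ⊢
      obtain ⟨T', π, hπ, d, hd⟩ := surjective_up_to_refinements_of_epi ρ x₂
      have h1 : (d ≫ q) ≫ cokernel.π I = 0 := by
        have h2 := hd =≫ τ
        simp only [Category.assoc, hτ, cokernel.π_desc, hρ] at h2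
        rw [hx₂, comp_zero] at h2
        rw [Category.assoc]
        exact h2.symm
      obtain ⟨T'', π', hπ', α, hα⟩ :=
        ((CategoryTheory.ShortComplex.exact_cokernel I).exact_up_to_refinements (d ≫ q) h1)
      dsimp at hα
      have hβw : (π' ≫ d - α ≫ s₀) ≫ q = 0 := by
        rw [sub_comp, sub_eq_zero, Category.assoc, Category.assoc, hs₀snd]
        exact hα
      refine ⟨T'', π' ≫ π, epi_comp _ _, kernel.lift q (π' ≫ d - α ≫ s₀) hβw, ?_⟩
      have h3 : (kernel.lift q (π' ≫ d - α ≫ s₀) hβw ≫ kernel.ι q) ≫ ρ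
          = (π' ≫ d - α ≫ s₀) ≫ ρ := by rw [kernel.lift_ι]
      calc (π' ≫ π) ≫ x₂ = π' ≫ (π ≫ x₂) := by simp only [Category.assoc]
        _ = π' ≫ (d ≫ ρ) := by rw [hd]
        _ = (π' ≫ d - α ≫ s₀) ≫ ρ := by
            rw [sub_comp, Category.assoc α s₀, hs₀ρ, comp_zero, sub_zero, Category.assoc]
        _ = kernel.lift q (π' ≫ d - α ≫ s₀) hβw ≫ κ := by
            rw [hκ, ← Category.assoc, kernel.lift_ι]
    · apply mono_of_cancel_zero
      intro T t ht
      have ht' : (t ≫ kernel.ι q) ≫ ρ = 0 := by rw [Category.assoc]; exact ht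
      obtain ⟨T', π, hπ, α, hα⟩ :=
        ((shortExact_of_mono' s₀).exact.exact_up_to_refinements (t ≫ kernel.ι q) ht')
      dsimp at hα
      have hα0 : α = 0 := by
        apply zero_of_comp_mono I
        rw [← hs₀snd, ← Category.assoc, ← hα]
        simp only [Category.assoc, kernel.condition, comp_zero]
      rw [hα0, zero_comp] at hα
      have h4 : t ≫ kernel.ι q = 0 :=
        zero_of_epi_comp π (by simpa only [Category.assoc] using hα)
      exact zero_of_comp_mono (kernel.ι q) h4
    · have h5 := hρτ
      haveI : Epi (q ≫ cokernel.π I) := epi_comp _ _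
      exact epi_of_epi_fac h5
  -- split the SES using the Ext hypothesis
  have hext' : Ext1Zero (cokernel I) (kernel q) :=
    ext1Zero_of_iso (Iso.refl _) (kerSndIso p b) hext
  obtain ⟨s, hs⟩ := hext' (cokernel s₀) κ τ wκτ hSE
  let spl := ShortComplex.Splitting.ofExactOfSection _ hSE.exact s hs hSE.mono_f
  set r' : D ⟶ kernel q := ρ ≫ spl.r with hr'
  have hιr' : kernel.ι q ≫ r' = 𝟙 (kernel q) := by
    rw [hr', ← Category.assoc]
    exact spl.f_r
  set σ : D ⟶ D := 𝟙 D - r' ≫ kernel.ι q with hσdef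
  have hσ0 : kernel.ι q ≫ σ = 0 := by
    rw [hσdef, comp_sub, Category.comp_id, ← Category.assoc, hιr', Category.id_comp, sub_self]
  set σ' : E ⟶ D := Abelian.epiDesc q σ hσ0 with hσ'
  have hqσ' : q ≫ σ' = σ := Abelian.comp_epiDesc q σ hσ0
  have hσq : σ ≫ q = q := by
    rw [hσdef, sub_comp, Category.id_comp, Category.assoc, kernel.condition, comp_zero, sub_zero]
  have hσ'q : σ' ≫ q = 𝟙 E := by
    rw [← cancel_epi q, ← Category.assoc, hqσ', hσq, Category.comp_id]
  refine ⟨σ' ≫ pullback.fst p b, ?_, ?_⟩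
  · have hIσ' : I ≫ σ' = s₀ := by
      rw [← hs₀snd, Category.assoc, hqσ', hσdef, comp_sub, Category.comp_id,
        ← Category.assoc s₀ r', hr', ← Category.assoc s₀ ρ, hρ, cokernel.condition,
        zero_comp, zero_comp, sub_zero]
    rw [← Category.assoc, hIσ', hs₀fst]
  · rw [Category.assoc, pullback.condition, ← Category.assoc, hσ'q, Category.id_comp]

/-- The factorization lemma: any map factors as a mono with cokernel in the left class
followed by an epi with kernel in the right class of a complete cotorsion pair. -/
theorem factorization {𝒜 ℬ : Set C} (hpair : IsCompleteCotorsionPair 𝒜 ℬ)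
    {A B : C} (h : A ⟶ B) :
    ∃ (G : C) (I : A ⟶ G) (P : G ⟶ B), I ≫ P = h ∧ Mono I ∧ cokernel I ∈ 𝒜 ∧
      Epi P ∧ kernel P ∈ ℬ := by
  obtain ⟨WF, C₀, ι₀, η, w₀, hse₀, hWF, hC₀⟩ := hpair.approx₂ B
  haveI : Epi η := hse₀.epi_g
  set φ : A ⊞ C₀ ⟶ B := biprod.desc h η with hφ
  haveI : Epi φ := epi_of_epi_fac (biprod.inr_desc h η)
  obtain ⟨WF', C', jK, pC, w₁, hse₁, hWF', hC'⟩ := hpair.approx₁ (kernel φ)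
  haveI : Mono jK := hse₁.mono_f
  obtain ⟨P, wP, hinrP, hseP⟩ :=
    pushoutSES (kernel.ι φ) φ (kernel.condition φ) (shortExact_of_epi' φ) jK
  set inr := pushout.inr jK (kernel.ι φ) with hinr
  haveI : Mono inr := Abelian.mono_pushout_of_mono_f jK (kernel.ι φ)
  refine ⟨pushout jK (kernel.ι φ), biprod.inl ≫ inr, P, ?_, mono_comp _ _, ?_, hseP.epi_g, ?_⟩
  · rw [Category.assoc, hinr, hinrP, hφ, biprod.inl_desc]
  · -- cokernel of the composite is in 𝒜 by extension closure
    obtain ⟨a, b, wab, hseab⟩ := cokerCompSES (biprod.inl : A ⟶ A ⊞ C₀) inr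
    rw [hpair.left_eq]
    refine leftPerp_extension a b wab hseab ?_ ?_
    · exact leftPerp_iso (cokerIso (biprodSES A C₀)) (hpair.left_eq ▸ hC₀)
    · exact leftPerp_iso ((cokerInrIso jK (kernel.ι φ)) ≪≫ (cokerIso hse₁))
        (hpair.left_eq ▸ hC')
  · rw [hpair.right_eq]
    exact rightPerp_iso (kerIso hseP) (hpair.right_eq ▸ hWF')

section BLemmas

variable {𝒲 : Set C} (hsum : SummandClosed 𝒲) (h23 : TwoOutOfThreeSES 𝒲)

include hsum h23

/-- If `i ≫ p = I ≫ P` with `i` mono with cokernel in `𝒲`, `p` epi with kernel in `𝒲`,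
and `P` epi with kernel in `𝒲`, then the mono `I` has cokernel in `𝒲`. -/
theorem cokerMem_of_factor {X Z Y E : C} (i : X ⟶ Z) (p : Z ⟶ Y) (I : X ⟶ E) (P : E ⟶ Y)
    [Mono i] [Epi p] [Mono I] [Epi P] (hip : i ≫ p = I ≫ P)
    (hci : cokernel i ∈ 𝒲) (hkp : kernel p ∈ 𝒲) (hkP : kernel P ∈ 𝒲) :
    cokernel I ∈ 𝒲 := by
  have hw : I ≫ P = i ≫ p := hip.symm
  set u : pushout I i ⟶ Y := pushout.desc P p hw with hu
  have hlu : pushout.inl I i ≫ u = P := pushout.inl_desc _ _ _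
  have hru : pushout.inr I i ≫ u = p := pushout.inr_desc _ _ _
  haveI : Mono (pushout.inr I i) := Abelian.mono_pushout_of_mono_f I i
  haveI : Mono (pushout.inl I i) := Abelian.mono_pushout_of_mono_g I i
  haveI : Epi u := epi_of_epi_fac hru
  haveI : Epi (pushout.inl I i ≫ u) := by rw [hlu]; infer_instance
  haveI : Epi (pushout.inr I i ≫ u) := by rw [hru]; infer_instance
  have hku : kernel u ∈ 𝒲 := by
    obtain ⟨a, b, wab, hseab⟩ := mixedSES₂ (pushout.inl I i) u
    refine (h23 _ _ _ a b wab hseab).2.1 ?_ ?_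
    · have h1 : kernel (pushout.inl I i ≫ u) ∈ 𝒲 := by rw [hlu]; exact hkP
      exact h1
    · exact mem_of_iso hsum (cokerInlIso I i) hci
  have hcinr : cokernel (pushout.inr I i) ∈ 𝒲 := by
    obtain ⟨a, b, wab, hseab⟩ := mixedSES₂ (pushout.inr I i) u
    refine (h23 _ _ _ a b wab hseab).1 ?_ hku
    have h1 : kernel (pushout.inr I i ≫ u) ∈ 𝒲 := by rw [hru]; exact hkp
    exact h1
  exact mem_of_iso hsum (cokerInrIso I i).symm hcinr

/-- If `q ≫ j = I ≫ P` with `q` epi with kernel in `𝒲`, `j` mono with cokernel in `𝒲`,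
and `P` epi with kernel in `𝒲`, then the mono `I` has cokernel in `𝒲`. -/
theorem cokerMem_of_factor' {A M B E : C} (q : A ⟶ M) (j : M ⟶ B) (I : A ⟶ E) (P : E ⟶ B)
    [Epi q] [Mono j] [Mono I] [Epi P] (hqj : q ≫ j = I ≫ P)
    (hkq : kernel q ∈ 𝒲) (hcj : cokernel j ∈ 𝒲) (hkP : kernel P ∈ 𝒲) :
    cokernel I ∈ 𝒲 := by
  have hw : I ≫ P = q ≫ j := hqj.symm
  set u : pushout I q ⟶ B := pushout.desc P j hw with hu
  have hlu : pushout.inl I q ≫ u = P := pushout.inl_desc _ _ _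
  have hru : pushout.inr I q ≫ u = j := pushout.inr_desc _ _ _
  haveI : Mono (pushout.inr I q) := Abelian.mono_pushout_of_mono_f I q
  haveI : Epi u := epi_of_epi_fac hlu
  haveI : Mono (pushout.inr I q ≫ u) := by rw [hru]; infer_instance
  haveI : Epi (pushout.inl I q ≫ u) := by rw [hlu]; infer_instance
  have hku : kernel u ∈ 𝒲 := by
    obtain ⟨a, b, wab, hseab⟩ := kerCompSES (pushout.inl I q) u
    refine (h23 _ _ _ a b wab hseab).1 ?_ ?_
    · exact mem_of_iso hsum (kerInlIso I q) hkq
    · have h1 : kernel (pushout.inl I q ≫ u) ∈ 𝒲 := by rw [hlu]; exact hkP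
      exact h1
  have hcinr : cokernel (pushout.inr I q) ∈ 𝒲 := by
    obtain ⟨a, b, wab, hseab⟩ := mixedSES₁ (pushout.inr I q) u
    refine (h23 _ _ _ a b wab hseab).2.1 hku ?_
    have h1 : cokernel (pushout.inr I q ≫ u) ∈ 𝒲 := by rw [hru]; exact hcj
    exact h1
  exact mem_of_iso hsum (cokerInrIso I q).symm hcinr

theorem cancel_left_wepi {A M Z : C} (q : A ⟶ M) (g : M ⟶ Z) [Epi q]
    (hkq : kernel q ∈ 𝒲) (h : Weq 𝒲 (q ≫ g)) : Weq 𝒲 g := by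
  obtain ⟨E, I, P, hIP, hMI, hcI, hEP, hkP⟩ := h
  haveI := hMI; haveI := hEP
  set u : pushout I q ⟶ Z := pushout.desc P g hIP with hu
  have hlu : pushout.inl I q ≫ u = P := pushout.inl_desc _ _ _
  have hru : pushout.inr I q ≫ u = g := pushout.inr_desc _ _ _
  haveI : Mono (pushout.inr I q) := Abelian.mono_pushout_of_mono_f I q
  haveI : Epi u := epi_of_epi_fac hlu
  haveI : Epi (pushout.inl I q ≫ u) := by rw [hlu]; infer_instance
  have hku : kernel u ∈ 𝒲 := by
    obtain ⟨a, b, wab, hseab⟩ := kerCompSES (pushout.inl I q) u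
    refine (h23 _ _ _ a b wab hseab).1 ?_ ?_
    · exact mem_of_iso hsum (kerInlIso I q) hkq
    · have h1 : kernel (pushout.inl I q ≫ u) ∈ 𝒲 := by rw [hlu]; exact hkP
      exact h1
  exact ⟨pushout I q, pushout.inr I q, u, hru, inferInstance,
    mem_of_iso hsum (cokerInrIso I q) hcI, inferInstance, hku⟩

theorem cancel_left_wmono {A M Z : C} (i : A ⟶ M) (g : M ⟶ Z) [Mono i]
    (hci : cokernel i ∈ 𝒲) (h : Weq 𝒲 (i ≫ g)) : Weq 𝒲 g := by
  obtain ⟨E, I, P, hIP, hMI, hcI, hEP, hkP⟩ := h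
  haveI := hMI; haveI := hEP
  set u : pushout I i ⟶ Z := pushout.desc P g hIP with hu
  have hlu : pushout.inl I i ≫ u = P := pushout.inl_desc _ _ _
  have hru : pushout.inr I i ≫ u = g := pushout.inr_desc _ _ _
  haveI : Mono (pushout.inr I i) := Abelian.mono_pushout_of_mono_f I i
  haveI : Mono (pushout.inl I i) := Abelian.mono_pushout_of_mono_g I i
  haveI : Epi u := epi_of_epi_fac hlu
  haveI : Epi (pushout.inl I i ≫ u) := by rw [hlu]; infer_instance
  have hku : kernel u ∈ 𝒲 := by
    obtain ⟨a, b, wab, hseab⟩ := mixedSES₂ (pushout.inl I i) u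
    refine (h23 _ _ _ a b wab hseab).2.1 ?_ ?_
    · have h1 : kernel (pushout.inl I i ≫ u) ∈ 𝒲 := by rw [hlu]; exact hkP
      exact h1
    · exact mem_of_iso hsum (cokerInlIso I i) hci
  exact ⟨pushout I i, pushout.inr I i, u, hru, inferInstance,
    mem_of_iso hsum (cokerInrIso I i) hcI, inferInstance, hku⟩

theorem cancel_right_wfib {X M B : C} (p : M ⟶ B) (g : X ⟶ M) [Epi p]
    (hkp : kernel p ∈ 𝒲) (h : Weq 𝒲 (g ≫ p)) : Weq 𝒲 g := by
  obtain ⟨E, I, P, hIP, hMI, hcI, hEP, hkP⟩ := h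
  haveI := hMI; haveI := hEP
  set l : X ⟶ pullback P p := pullback.lift I g hIP with hl
  have hl1 : l ≫ pullback.fst P p = I := pullback.lift_fst _ _ _
  have hl2 : l ≫ pullback.snd P p = g := pullback.lift_snd _ _ _
  haveI : Mono l := mono_of_mono_fac hl1
  haveI : Epi (pullback.snd P p) := Abelian.epi_pullback_of_epi_f P p
  haveI : Epi (pullback.fst P p) := Abelian.epi_pullback_of_epi_g P p
  haveI : Mono (l ≫ pullback.fst P p) := by rw [hl1]; infer_instance
  have hcl : cokernel l ∈ 𝒲 := by
    obtain ⟨a, b, wab, hseab⟩ := mixedSES₁ l (pullback.fst P p)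
    refine (h23 _ _ _ a b wab hseab).2.1 ?_ ?_
    · exact mem_of_iso hsum (kerFstIso P p) hkp
    · have h1 : cokernel (l ≫ pullback.fst P p) ∈ 𝒲 := by rw [hl1]; exact hcI
      exact h1
  exact ⟨pullback P p, l, pullback.snd P p, hl2, inferInstance, hcl, inferInstance,
    mem_of_iso hsum (kerSndIso P p) hkP⟩

theorem cancel_right_wcof {X M B : C} (j : M ⟶ B) (g : X ⟶ M) [Mono j]
    (hcj : cokernel j ∈ 𝒲) (h : Weq 𝒲 (g ≫ j)) : Weq 𝒲 g := by
  obtain ⟨E, I, P, hIP, hMI, hcI, hEP, hkP⟩ := h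
  haveI := hMI; haveI := hEP
  set l : X ⟶ pullback P j := pullback.lift I g hIP with hl
  have hl1 : l ≫ pullback.fst P j = I := pullback.lift_fst _ _ _
  have hl2 : l ≫ pullback.snd P j = g := pullback.lift_snd _ _ _
  haveI : Mono l := mono_of_mono_fac hl1
  haveI : Epi (pullback.snd P j) := Abelian.epi_pullback_of_epi_f P j
  have hcl : cokernel l ∈ 𝒲 := by
    obtain ⟨a, b, wab, hseab⟩ := cokerCompSES l (pullback.fst P j)
    refine (h23 _ _ _ a b wab hseab).2.2 ?_ ?_
    · have h1 : cokernel (l ≫ pullback.fst P j) ∈ 𝒲 := by rw [hl1]; exact hcI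
      exact h1
    · exact mem_of_iso hsum (cokerFstIso P j) hcj
  exact ⟨pullback P j, l, pullback.snd P j, hl2, inferInstance, hcl, inferInstance,
    mem_of_iso hsum (kerSndIso P j) hkP⟩

end BLemmas


end Stmt7Aux

open Stmt7Aux CategoryTheory.Preadditive

/-- Let `C` be an abelian category and `(𝒞, 𝒲, 𝓕)` a triple of classes of objects such
that `𝒲` is closed under direct summands and has the 2-out-of-3 property for short
exact sequences, and `(𝒞, 𝒲 ∩ 𝓕)` and `(𝒞 ∩ 𝒲, 𝓕)` are complete cotorsion pairs.
Then the associated class `W` of weak equivalences is closed under retracts in the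
arrow category and satisfies the 2-out-of-3 property for composition. -/
theorem stmt_7 (𝒞 𝒲 𝓕 : Set C)
    (hsum : SummandClosed 𝒲) (h23 : TwoOutOfThreeSES 𝒲)
    (hpair₁ : IsCompleteCotorsionPair 𝒞 (𝒲 ∩ 𝓕))
    (hpair₂ : IsCompleteCotorsionPair (𝒞 ∩ 𝒲) 𝓕) :
    (∀ {A B X Y : C} (h : A ⟶ B) (f : X ⟶ Y),
      Weq 𝒲 f →
      ∀ (iA : A ⟶ X) (rA : X ⟶ A) (iB : B ⟶ Y) (rB : Y ⟶ B),
        iA ≫ rA = 𝟙 A → iB ≫ rB = 𝟙 B → iA ≫ f = h ≫ iB → f ≫ rB = rA ≫ h →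
        Weq 𝒲 h) ∧
    (∀ {X Y Z : C} (f : X ⟶ Y) (g : Y ⟶ Z),
      (Weq 𝒲 f → Weq 𝒲 g → Weq 𝒲 (f ≫ g)) ∧
      (Weq 𝒲 f → Weq 𝒲 (f ≫ g) → Weq 𝒲 g) ∧
      (Weq 𝒲 g → Weq 𝒲 (f ≫ g) → Weq 𝒲 f)) := by
  constructor
  · -- retracts
    intro A B X Y h f hf iA rA iB rB hiA hiB hsq1 hsq2
    obtain ⟨Zf, i, p, hip, hMi, hci, hEp, hkp⟩ := hf
    haveI := hMi; haveI := hEp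
    obtain ⟨E, I, P, hIP, hMonoI, hcI𝒞, hEpiP, hkPWF⟩ := factorization hpair₁ h
    obtain ⟨Zf', I_f, P_f, hIPf, hMIf, hcIf𝒞, hEPf, hkPfWF⟩ := factorization hpair₁ f
    haveI := hMonoI; haveI := hEpiP; haveI := hMIf; haveI := hEPf
    have hcIf𝒲 : cokernel I_f ∈ 𝒲 :=
      cokerMem_of_factor hsum h23 i p I_f P_f (hip.trans hIPf.symm) hci hkp hkPfWF.1
    have hext1 : Ext1Zero (cokernel I) (kernel P_f) :=
      (hpair₁.left_eq ▸ hcI𝒞 : cokernel I ∈ leftPerp (𝒲 ∩ 𝓕)) _ hkPfWF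
    have hext2 : Ext1Zero (cokernel I_f) (kernel P) :=
      (hpair₂.left_eq ▸ (⟨hcIf𝒞, hcIf𝒲⟩ : cokernel I_f ∈ 𝒞 ∩ 𝒲) :
        cokernel I_f ∈ leftPerp 𝓕) _ hkPWF.2
    have hcomm1 : I ≫ (P ≫ iB) = (iA ≫ I_f) ≫ P_f := by
      calc I ≫ P ≫ iB = (I ≫ P) ≫ iB := by simp only [Category.assoc]
        _ = h ≫ iB := by rw [hIP]
        _ = iA ≫ f := hsq1.symm
        _ = iA ≫ I_f ≫ P_f := by rw [hIPf]
        _ = (iA ≫ I_f) ≫ P_f := by simp only [Category.assoc]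
    have hcomm2 : I_f ≫ (P_f ≫ rB) = (rA ≫ I) ≫ P := by
      calc I_f ≫ P_f ≫ rB = (I_f ≫ P_f) ≫ rB := by simp only [Category.assoc]
        _ = f ≫ rB := by rw [hIPf]
        _ = rA ≫ h := hsq2
        _ = rA ≫ I ≫ P := by rw [hIP]
        _ = (rA ≫ I) ≫ P := by simp only [Category.assoc]
    obtain ⟨L, hL1, hL2⟩ := lifting I P_f (iA ≫ I_f) (P ≫ iB) hcomm1 hext1
    obtain ⟨R, hR1, hR2⟩ := lifting I_f P (rA ≫ I) (P_f ≫ rB) hcomm2 hext2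
    have he1 : I ≫ L ≫ R = I := by
      calc I ≫ L ≫ R = (I ≫ L) ≫ R := by simp only [Category.assoc]
        _ = (iA ≫ I_f) ≫ R := by rw [hL1]
        _ = iA ≫ (I_f ≫ R) := by simp only [Category.assoc]
        _ = iA ≫ rA ≫ I := by rw [hR1]
        _ = (iA ≫ rA) ≫ I := by simp only [Category.assoc]
        _ = I := by rw [hiA, Category.id_comp]
    have he2 : (L ≫ R) ≫ P = P := by
      calc (L ≫ R) ≫ P = L ≫ (R ≫ P) := by simp only [Category.assoc]
        _ = L ≫ P_f ≫ rB := by rw [hR2]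
        _ = (L ≫ P_f) ≫ rB := by simp only [Category.assoc]
        _ = (P ≫ iB) ≫ rB := by rw [hL2]
        _ = P ≫ (iB ≫ rB) := by simp only [Category.assoc]
        _ = P := by rw [hiB, Category.comp_id]
    have ht₀w : (L ≫ R - 𝟙 E) ≫ P = 0 := by
      rw [sub_comp, he2, Category.id_comp, sub_self]
    set t₀ : E ⟶ kernel P := kernel.lift P (L ≫ R - 𝟙 E) ht₀w with ht₀def
    have ht₀ι : t₀ ≫ kernel.ι P = L ≫ R - 𝟙 E := kernel.lift_ι _ _ _
    have hIt₀ : I ≫ t₀ = 0 := by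
      rw [← cancel_mono (kernel.ι P), Category.assoc, ht₀ι, comp_sub, Category.comp_id,
        zero_comp, he1, sub_self]
    set t' : cokernel I ⟶ kernel P := cokernel.desc I t₀ hIt₀ with ht'def
    have hπt' : cokernel.π I ≫ t' = t₀ := cokernel.π_desc _ _ _
    have hcw : I ≫ L ≫ cokernel.π I_f = 0 := by
      rw [← Category.assoc, hL1, Category.assoc, cokernel.condition, comp_zero]
    set c : cokernel I ⟶ cokernel I_f := cokernel.desc I (L ≫ cokernel.π I_f) hcw with hcdef
    have hrw : I_f ≫ R ≫ cokernel.π I = 0 := by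
      rw [← Category.assoc, hR1, Category.assoc, cokernel.condition, comp_zero]
    set r'' : cokernel I_f ⟶ cokernel I := cokernel.desc I_f (R ≫ cokernel.π I) hrw with hrdef
    have key : c ≫ r'' = 𝟙 (cokernel I) + t' ≫ (kernel.ι P ≫ cokernel.π I) := by
      rw [← cancel_epi (cokernel.π I)]
      have e1 : cokernel.π I ≫ c ≫ r'' = (L ≫ R) ≫ cokernel.π I := by
        rw [← Category.assoc, cokernel.π_desc, Category.assoc, cokernel.π_desc,
          ← Category.assoc]
      have e2 : cokernel.π I ≫ (𝟙 (cokernel I) + t' ≫ (kernel.ι P ≫ cokernel.π I))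
          = cokernel.π I + (L ≫ R - 𝟙 E) ≫ cokernel.π I := by
        rw [comp_add, Category.comp_id, ← Category.assoc, hπt', ← Category.assoc, ht₀ι]
      rw [e1, e2, sub_comp, Category.id_comp]
      abel
    have hW' : (cokernel I_f ⊞ kernel P) ∈ 𝒲 := by
      have hse := biprodSES (cokernel I_f) (kernel P)
      exact (h23 _ _ _ _ _ _ hse).2.1 hcIf𝒲 hkPWF.1
    have hsummand : cokernel I ∈ 𝒲 := by
      refine hsum _ _ hW' ⟨biprod.lift c (-t'),
        biprod.desc r'' (kernel.ι P ≫ cokernel.π I), ?_⟩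
      rw [biprod.lift_desc, neg_comp, key]
      abel
    exact ⟨E, I, P, hIP, hMonoI, hsummand, hEpiP, hkPWF.1⟩
  · -- two out of three
    intro X Y Z f g
    refine ⟨?_, ?_, ?_⟩
    · -- composition
      intro hf hg
      obtain ⟨Zf, i_f, p_f, hipf, hMif, hcif, hEpf, hkpf⟩ := hf
      obtain ⟨Zg, i_g, p_g, hipg, hMig, hcig, hEpg, hkpg⟩ := hg
      haveI := hMif; haveI := hEpf; haveI := hMig; haveI := hEpg
      obtain ⟨E, I, P, hIP, hMonoI, hcI𝒞, hEpiP, hkPWF⟩ := factorization hpair₁ (p_f ≫ i_g)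
      haveI := hMonoI; haveI := hEpiP
      have hcI𝒲 : cokernel I ∈ 𝒲 :=
        cokerMem_of_factor' hsum h23 p_f i_g I P hIP.symm hkpf hcig hkPWF.1
      have hcomp : (i_f ≫ I) ≫ (P ≫ p_g) = f ≫ g := by
        calc (i_f ≫ I) ≫ P ≫ p_g = i_f ≫ (I ≫ P) ≫ p_g := by simp only [Category.assoc]
          _ = i_f ≫ (p_f ≫ i_g) ≫ p_g := by rw [hIP]
          _ = (i_f ≫ p_f) ≫ (i_g ≫ p_g) := by simp only [Category.assoc]
          _ = f ≫ g := by rw [hipf, hipg]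
      have hcoker : cokernel (i_f ≫ I) ∈ 𝒲 := by
        obtain ⟨a, b, wab, hseab⟩ := cokerCompSES i_f I
        exact (h23 _ _ _ a b wab hseab).2.1 hcif hcI𝒲
      have hker : kernel (P ≫ p_g) ∈ 𝒲 := by
        obtain ⟨a, b, wab, hseab⟩ := kerCompSES P p_g
        exact (h23 _ _ _ a b wab hseab).2.1 hkPWF.1 hkpg
      exact ⟨E, i_f ≫ I, P ≫ p_g, hcomp, mono_comp _ _, hcoker, epi_comp _ _, hker⟩
    · -- left cancellation
      intro hf hfg
      obtain ⟨Zf, i_f, p_f, hipf, hMif, hcif, hEpf, hkpf⟩ := hf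
      haveI := hMif; haveI := hEpf
      have h1 : Weq 𝒲 (p_f ≫ g) := by
        refine cancel_left_wmono hsum h23 i_f (p_f ≫ g) hcif ?_
        show Weq 𝒲 (i_f ≫ p_f ≫ g)
        rw [← Category.assoc, hipf]
        exact hfg
      exact cancel_left_wepi hsum h23 p_f g hkpf h1
    · -- right cancellation
      intro hg hfg
      obtain ⟨Zg, i_g, p_g, hipg, hMig, hcig, hEpg, hkpg⟩ := hg
      haveI := hMig; haveI := hEpg
      have h1 : Weq 𝒲 (f ≫ i_g) := by
        refine cancel_right_wfib hsum h23 p_g (f ≫ i_g) hkpg ?_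
        show Weq 𝒲 ((f ≫ i_g) ≫ p_g)
        rw [Category.assoc, hipg]
        exact hfg
      exact cancel_right_wcof hsum h23 i_g f hcig h1
end

section
/- Let C be an abelian category and (𝒞, 𝒲, 𝓕) a triple of classes of objects of C such that 𝒲 is closed under direct summands and has the 2-out-of-3 property for short exact sequences, and both (𝒞, 𝒲 ∩ 𝓕) and (𝒞 ∩ 𝒲, 𝓕) are complete cotorsion pairs in C. Let p : X → Y be an epimorphism with kernel in 𝒲 ∩ 𝓕 and i : Y → Z a monomorphism with cokernel in 𝒞 ∩ 𝒲. Then there exist a monomorphism j : X → U with cokernel in 𝒞 ∩ 𝒲 and an epimorphism q : U → Z with kernel in 𝒲 ∩ 𝓕 such that q ∘ j = i ∘ p. -/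
open CategoryTheory CategoryTheory.Limits

universe v u

variable {C : Type u} [Category.{v} C] [Abelian C]

section Aux

open CategoryTheory.Abelian

attribute [local instance] Pseudoelement.objectToSort Pseudoelement.homToFun

open Pseudoelement

lemma stmt8_ses_of_epi {E Z : C} (g : E ⟶ Z) [Epi g] :
    (ShortComplex.mk (kernel.ι g) g (kernel.condition g)).ShortExact :=
  ShortComplex.ShortExact.mk' (ShortComplex.exact_kernel g) inferInstance ‹_›

lemma stmt8_ses_of_mono {X E : C} (f : X ⟶ E) [Mono f] :
    (ShortComplex.mk f (cokernel.π f) (cokernel.condition f)).ShortExact :=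
  ShortComplex.ShortExact.mk' (ShortComplex.exact_cokernel f) ‹_› inferInstance

lemma stmt8_ext1Zero_of_iso_left {A A' B : C} (h : Ext1Zero A B) (e : A' ≅ A) :
    Ext1Zero A' B := by
  intro E i p w hse
  have hse' : (ShortComplex.mk i (p ≫ e.hom)
      (by rw [← Category.assoc, w, zero_comp])).ShortExact :=
    ShortComplex.shortExact_of_iso (S₁ := ShortComplex.mk i p w)
      (ShortComplex.isoMk (Iso.refl _) (Iso.refl _) e (by simp) (by simp)) hse
  obtain ⟨s, hs⟩ := h E i (p ≫ e.hom) (by rw [← Category.assoc, w, zero_comp]) hse'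
  refine ⟨e.hom ≫ s, ?_⟩
  have hsp : s ≫ p = e.inv := by
    rw [← cancel_mono e.hom, Category.assoc, hs, Iso.inv_hom_id]
  rw [Category.assoc, hsp, Iso.hom_inv_id]

lemma stmt8_ext1Zero_of_iso_right {A B B' : C} (h : Ext1Zero A B) (e : B' ≅ B) :
    Ext1Zero A B' := by
  intro E i p w hse
  have hse' : (ShortComplex.mk (e.inv ≫ i) p
      (by rw [Category.assoc, w, comp_zero])).ShortExact :=
    ShortComplex.shortExact_of_iso (S₁ := ShortComplex.mk i p w)
      (ShortComplex.isoMk e (Iso.refl _) (Iso.refl _) (by simp) (by simp)) hse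
  exact h E (e.inv ≫ i) p (by rw [Category.assoc, w, comp_zero]) hse'

lemma stmt8_mem_leftPerp_of_iso {S : Set C} {A A' : C} (e : A' ≅ A)
    (h : A ∈ leftPerp S) : A' ∈ leftPerp S :=
  fun B hB => stmt8_ext1Zero_of_iso_left (h B hB) e

lemma stmt8_mem_rightPerp_of_iso {S : Set C} {B B' : C} (e : B' ≅ B)
    (h : B ∈ rightPerp S) : B' ∈ rightPerp S :=
  fun A hA => stmt8_ext1Zero_of_iso_right (h A hA) e

/-- Pulling back a short exact sequence `0 → N → E → M → 0` along `g : M' → M` gives a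
short exact sequence `0 → N → pullback b g → M' → 0`. -/
lemma stmt8_ses_pullback {N E M M' : C} {a : N ⟶ E} {b : E ⟶ M} {w : a ≫ b = 0}
    (h : (ShortComplex.mk a b w).ShortExact) (g : M' ⟶ M) :
    (ShortComplex.mk (pullback.lift a 0 (by rw [w, zero_comp]) : N ⟶ pullback b g)
      (pullback.snd b g) (pullback.lift_snd _ _ _)).ShortExact := by
  haveI : Epi b := h.epi_g
  haveI : Mono a := h.mono_f
  haveI hm : Mono (pullback.lift a 0 (by rw [w, zero_comp]) : N ⟶ pullback b g) :=
    mono_of_mono_fac (pullback.lift_fst a 0 (by rw [w, zero_comp]))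
  refine ShortComplex.ShortExact.mk' ?_ hm inferInstance
  apply ShortComplex.exact_of_f_is_kernel
  refine KernelFork.IsLimit.ofι' _ _ (fun {T} t ht => ?_)
  obtain ⟨u, hu⟩ := KernelFork.IsLimit.lift' h.fIsKernel (t ≫ pullback.fst b g)
    (by rw [Category.assoc, pullback.condition, ← Category.assoc, ht, zero_comp])
  refine ⟨u, ?_⟩
  apply pullback.hom_ext
  · rw [Category.assoc, pullback.lift_fst]; exact hu
  · rw [Category.assoc, pullback.lift_snd, comp_zero]; exact ht.symm

/-- The kernels of a composition of epimorphisms form a short exact sequence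
`0 → ker a → ker (a ≫ b) → ker b → 0`. -/
lemma stmt8_ses_ker_comp {U V W : C} (a : U ⟶ V) (b : V ⟶ W) [Epi a]
    (m : kernel a ⟶ kernel (a ≫ b)) (e : kernel (a ≫ b) ⟶ kernel b)
    (hm : m ≫ kernel.ι (a ≫ b) = kernel.ι a)
    (he : e ≫ kernel.ι b = kernel.ι (a ≫ b) ≫ a)
    (wme : m ≫ e = 0) :
    (ShortComplex.mk m e wme).ShortExact := by
  haveI : Mono m := mono_of_mono_fac hm
  haveI : Epi e := by
    apply epi_of_pseudo_surjective
    intro y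
    obtain ⟨u, hu⟩ := pseudo_surjective_of_epi a (kernel.ι b y)
    have h1 : (a ≫ b) u = 0 := by
      rw [Pseudoelement.comp_apply, hu, ← Pseudoelement.comp_apply, kernel.condition,
        Pseudoelement.zero_apply]
    obtain ⟨u₀, hu₀⟩ := pseudo_exact_of_exact (ShortComplex.exact_kernel (a ≫ b)) u h1
    refine ⟨u₀, pseudo_injective_of_mono (kernel.ι b) ?_⟩
    rw [← Pseudoelement.comp_apply, he, Pseudoelement.comp_apply, hu₀, hu]
  refine ShortComplex.ShortExact.mk' ?_ ‹_› ‹_›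
  apply Pseudoelement.exact_of_pseudo_exact
  intro u hu
  have h1 : a (kernel.ι (a ≫ b) u) = 0 := by
    rw [← Pseudoelement.comp_apply, ← he, Pseudoelement.comp_apply, hu,
      Pseudoelement.apply_zero]
  obtain ⟨n, hn⟩ := pseudo_exact_of_exact (ShortComplex.exact_kernel a) _ h1
  refine ⟨n, pseudo_injective_of_mono (kernel.ι (a ≫ b)) ?_⟩
  rw [← Pseudoelement.comp_apply, hm, hn]


/-- `Ext¹(A,-) = 0` is closed under extensions. -/
lemma stmt8_ext1Zero_extension {A T₅ B T : C} {u : T₅ ⟶ B} {v : B ⟶ T} {wuv : u ≫ v = 0}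
    (hses : (ShortComplex.mk u v wuv).ShortExact)
    (h₅ : Ext1Zero A T₅) (hT : Ext1Zero A T) : Ext1Zero A B := by
  intro E a b wab hE
  haveI : Mono a := hE.mono_f
  haveI : Epi b := hE.epi_g
  haveI : Mono u := hses.mono_f
  haveI : Epi v := hses.epi_g
  -- form E' := E / T₅
  set π' : E ⟶ cokernel (u ≫ a) := cokernel.π (u ≫ a) with hπ'
  obtain ⟨a', ha'⟩ := CokernelCofork.IsColimit.desc' hses.gIsCokernel (a ≫ π')
    (by show u ≫ a ≫ π' = 0; rw [← Category.assoc]; exact cokernel.condition (u ≫ a))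
  have ha' : v ≫ a' = a ≫ π' := ha'
  set b' : cokernel (u ≫ a) ⟶ A := cokernel.desc (u ≫ a) b
    (by rw [Category.assoc, wab, comp_zero]) with hb'
  have hπb : π' ≫ b' = b := cokernel.π_desc _ _ _
  have wab' : a' ≫ b' = 0 := by
    rw [← cancel_epi v, ← Category.assoc, ha', Category.assoc, hπb, wab, comp_zero]
  have hE' : (ShortComplex.mk a' b' wab').ShortExact := by
    haveI : Epi b' := epi_of_epi_fac hπb
    haveI : Mono a' := by
      apply Pseudoelement.mono_of_zero_of_map_zero
      intro t ht
      obtain ⟨b₀, hb₀⟩ := Pseudoelement.pseudo_surjective_of_epi v t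
      have h1 : π' (a b₀) = 0 := by
        rw [← Pseudoelement.comp_apply, ← ha', Pseudoelement.comp_apply, hb₀, ht]
      obtain ⟨z, hz⟩ := Pseudoelement.pseudo_exact_of_exact
        (ShortComplex.exact_cokernel (u ≫ a)) _ h1
      have h2 : a (u z) = a b₀ := by
        rw [← Pseudoelement.comp_apply]; exact hz
      have h3 : u z = b₀ := Pseudoelement.pseudo_injective_of_mono a h2
      rw [← hb₀, ← h3, ← Pseudoelement.comp_apply, wuv, Pseudoelement.zero_apply]
    refine ShortComplex.ShortExact.mk' ?_ ‹_› ‹_›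
    apply Pseudoelement.exact_of_pseudo_exact
    intro x hx
    obtain ⟨e₀, he₀⟩ := Pseudoelement.pseudo_surjective_of_epi π' x
    have h1 : b e₀ = 0 := by
      rw [← hπb, Pseudoelement.comp_apply, he₀, hx]
    obtain ⟨b₀, hb₀⟩ := Pseudoelement.pseudo_exact_of_exact hE.exact e₀ h1
    refine ⟨v b₀, ?_⟩
    rw [← Pseudoelement.comp_apply, ha', Pseudoelement.comp_apply, hb₀, he₀]
  obtain ⟨s₁, hs₁⟩ := hT _ a' b' wab' hE'
  haveI : Mono (u ≫ a) := mono_comp _ _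
  have hses₂ : (ShortComplex.mk (u ≫ a) π' (cokernel.condition _)).ShortExact :=
    stmt8_ses_of_mono (u ≫ a)
  have hsesP := stmt8_ses_pullback hses₂ s₁
  obtain ⟨s₂, hs₂⟩ := h₅ _ _ _ _ hsesP
  refine ⟨s₂ ≫ pullback.fst π' s₁, ?_⟩
  have hfb : pullback.fst π' s₁ ≫ b = pullback.snd π' s₁ := by
    rw [← hπb, ← Category.assoc, pullback.condition, Category.assoc, hs₁, Category.comp_id]
  rw [Category.assoc, hfb, hs₂]

/-- The right perpendicular class is closed under extensions. -/
lemma stmt8_rightPerp_extension {S : Set C} {T₅ B T : C} {u : T₅ ⟶ B} {v : B ⟶ T}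
    {wuv : u ≫ v = 0} (hses : (ShortComplex.mk u v wuv).ShortExact)
    (h₅ : T₅ ∈ rightPerp S) (hT : T ∈ rightPerp S) : B ∈ rightPerp S :=
  fun A hA => stmt8_ext1Zero_extension hses (h₅ A hA) (hT A hA)



/-- The snake-style argument: if `0 → X → U → C₅ → 0` is exact, `q : U → Z` is epi,
and `j ≫ q = f`, then `C₅` lies in `𝒲` provided `ker f`, `coker f`, `ker q` do. -/
lemma stmt8_snake {X U Z C₅ : C} (j : X ⟶ U) (snd : U ⟶ C₅) (q : U ⟶ Z)
    {w : j ≫ snd = 0} (hsesC : (ShortComplex.mk j snd w).ShortExact) [Epi q]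
    (f : X ⟶ Z) (hjq : j ≫ q = f)
    (𝒲 : Set C) (h23 : TwoOutOfThreeSES 𝒲)
    (hKW : kernel f ∈ 𝒲) (hDW : cokernel f ∈ 𝒲) (hkqW : kernel q ∈ 𝒲) :
    C₅ ∈ 𝒲 := by
  haveI : Epi snd := hsesC.epi_g
  obtain ⟨wD, hwD⟩ := CokernelCofork.IsColimit.desc' hsesC.gIsCokernel (q ≫ cokernel.π f)
    (by show j ≫ q ≫ cokernel.π f = 0
        rw [← Category.assoc, hjq, cokernel.condition])
  have hwD : snd ≫ wD = q ≫ cokernel.π f := hwD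
  haveI : Epi (q ≫ cokernel.π f) := epi_comp _ _
  haveI : Epi wD := epi_of_epi_fac hwD
  have hses2 : (ShortComplex.mk (kernel.ι wD) wD (kernel.condition wD)).ShortExact :=
    stmt8_ses_of_epi wD
  have hg0 : (kernel.ι q ≫ snd) ≫ wD = 0 := by
    rw [Category.assoc, hwD, ← Category.assoc, kernel.condition, zero_comp]
  have hgt := kernel.lift_ι wD (kernel.ι q ≫ snd) hg0
  set gt := kernel.lift wD (kernel.ι q ≫ snd) hg0 with hgtdef
  have hk0 : (kernel.ι f ≫ j) ≫ q = 0 := by rw [Category.assoc, hjq, kernel.condition]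
  have hkι := kernel.lift_ι q (kernel.ι f ≫ j) hk0
  set k := kernel.lift q (kernel.ι f ≫ j) hk0 with hkdef
  haveI : Mono j := hsesC.mono_f
  haveI : Mono (kernel.ι f ≫ j) := mono_comp _ _
  haveI : Mono k := mono_of_mono_fac hkι
  have wkg : k ≫ gt = 0 := by
    apply zero_of_comp_mono (kernel.ι wD)
    rw [Category.assoc, hgt, ← Category.assoc, hkι, Category.assoc, w, comp_zero]
  have hses1 : (ShortComplex.mk k gt wkg).ShortExact := by
    haveI : Epi gt := by
      apply epi_of_pseudo_surjective
      intro a'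
      obtain ⟨u, hu⟩ := pseudo_surjective_of_epi snd (kernel.ι wD a')
      have h1 : cokernel.π f (q u) = 0 := by
        rw [← Pseudoelement.comp_apply, ← hwD, Pseudoelement.comp_apply, hu,
          ← Pseudoelement.comp_apply, kernel.condition, Pseudoelement.zero_apply]
      obtain ⟨x₀, hx₀⟩ := pseudo_exact_of_exact (ShortComplex.exact_cokernel f) (q u) h1
      have h2 : q u = q (j x₀) := by
        rw [← Pseudoelement.comp_apply, hjq, hx₀]
      obtain ⟨z, hz0, hzp⟩ := sub_of_eq_image q u (j x₀) h2
      have h3 : snd z = snd u := hzp _ snd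
        (by rw [← Pseudoelement.comp_apply, w, Pseudoelement.zero_apply])
      obtain ⟨b, hb⟩ := pseudo_exact_of_exact (ShortComplex.exact_kernel q) z hz0
      refine ⟨b, pseudo_injective_of_mono (kernel.ι wD) ?_⟩
      rw [← Pseudoelement.comp_apply, hgt, Pseudoelement.comp_apply, hb, h3, hu]
    refine ShortComplex.ShortExact.mk' ?_ ‹_› ‹_›
    apply Pseudoelement.exact_of_pseudo_exact
    intro b hb
    have h1 : snd (kernel.ι q b) = 0 := by
      rw [← Pseudoelement.comp_apply, ← hgt, Pseudoelement.comp_apply, hb,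
        Pseudoelement.apply_zero]
    obtain ⟨x, hx⟩ := pseudo_exact_of_exact hsesC.exact (kernel.ι q b) h1
    have hx' : j x = kernel.ι q b := hx
    have h2 : f x = 0 := by
      rw [← hjq, Pseudoelement.comp_apply, hx', ← Pseudoelement.comp_apply,
        kernel.condition, Pseudoelement.zero_apply]
    obtain ⟨x₀, hx₀⟩ := pseudo_exact_of_exact (ShortComplex.exact_kernel f) x h2
    refine ⟨x₀, pseudo_injective_of_mono (kernel.ι q) ?_⟩
    rw [← Pseudoelement.comp_apply, hkι, Pseudoelement.comp_apply, hx₀, hx']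
  have hA'W : kernel wD ∈ 𝒲 := (h23 _ _ _ _ _ _ hses1).1 hKW hkqW
  exact (h23 _ _ _ _ _ _ hses2).2.1 hA'W hDW


set_option maxHeartbeats 2000000 in
/-- Let `C` be an abelian category and `(𝒞, 𝒲, 𝓕)` a triple of classes of objects such
that `𝒲` is closed under direct summands and has the 2-out-of-3 property for short
exact sequences, and `(𝒞, 𝒲 ∩ 𝓕)` and `(𝒞 ∩ 𝒲, 𝓕)` are complete cotorsion pairs.
If `p : X → Y` is an epimorphism with kernel in `𝒲 ∩ 𝓕` and `i : Y → Z` is a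
monomorphism with cokernel in `𝒞 ∩ 𝒲`, then there exist a monomorphism `j : X → U`
with cokernel in `𝒞 ∩ 𝒲` and an epimorphism `q : U → Z` with kernel in `𝒲 ∩ 𝓕` such
that `q ∘ j = i ∘ p`. -/
theorem stmt_8 (𝒞 𝒲 𝓕 : Set C)
    (hsum : SummandClosed 𝒲) (h23 : TwoOutOfThreeSES 𝒲)
    (hpair₁ : IsCompleteCotorsionPair 𝒞 (𝒲 ∩ 𝓕))
    (hpair₂ : IsCompleteCotorsionPair (𝒞 ∩ 𝒲) 𝓕)
    {X Y Z : C} (p : X ⟶ Y) (i : Y ⟶ Z)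
    (hp : Epi p) (hpker : kernel p ∈ 𝒲 ∩ 𝓕)
    (hi : Mono i) (hicoker : cokernel i ∈ 𝒞 ∩ 𝒲) :
    ∃ (U : C) (j : X ⟶ U) (q : U ⟶ Z),
      Mono j ∧ cokernel j ∈ 𝒞 ∩ 𝒲 ∧ Epi q ∧ kernel q ∈ 𝒲 ∩ 𝓕 ∧
      j ≫ q = p ≫ i := by
  haveI := hp
  haveI := hi
  set f : X ⟶ Z := p ≫ i with hf
  -- Step 1: a special `(𝒲 ∩ 𝓕)`-preenvelope of `X`
  obtain ⟨T, Ct, m, r, w₁, hses₁, hTmem, hCtmem⟩ := hpair₁.approx₁ X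
  haveI : Mono m := hses₁.mono_f
  set j₁ : X ⟶ T ⊞ Z := biprod.lift m f with hj₁
  haveI : Mono j₁ := mono_of_mono_fac (biprod.lift_fst m f)
  set π : T ⊞ Z ⟶ cokernel j₁ := cokernel.π j₁ with hπdef
  have hses₀ : (ShortComplex.mk j₁ π (cokernel.condition j₁)).ShortExact :=
    stmt8_ses_of_mono j₁
  -- Step 2: a special `𝒞`-precover of `cokernel j₁`
  obtain ⟨T₅, C₅, t₅, ψ, w₂, hses₂, hT₅mem, hC₅mem⟩ := hpair₁.approx₂ (cokernel j₁)
  haveI : Epi ψ := hses₂.epi_g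
  haveI : Mono t₅ := hses₂.mono_f
  -- Step 3: the factorization object
  set fst : pullback π ψ ⟶ T ⊞ Z := pullback.fst π ψ with hfstdef
  set snd : pullback π ψ ⟶ C₅ := pullback.snd π ψ with hsnddef
  have hsesC := stmt8_ses_pullback hses₀ ψ
  set j : X ⟶ pullback π ψ := pullback.lift j₁ 0 (by rw [cokernel.condition, zero_comp])
    with hjdef
  set q : pullback π ψ ⟶ Z := fst ≫ biprod.snd with hqdef
  have hjfst : j ≫ fst = j₁ := pullback.lift_fst _ _ _
  have hjsnd : j ≫ snd = 0 := pullback.lift_snd _ _ _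
  have hjq : j ≫ q = f := by rw [hqdef, ← Category.assoc, hjfst, hj₁, biprod.lift_snd]
  haveI : Mono j := mono_of_mono_fac hjfst
  haveI : Epi fst := by rw [hfstdef]; infer_instance
  haveI : Epi q := by rw [hqdef]; exact epi_comp _ _
  -- the short exact sequence 0 → T₅ → pullback π ψ → T ⊞ Z → 0
  have hsesB : (ShortComplex.mk
      (pullback.lift 0 t₅ (by rw [zero_comp, w₂]) : T₅ ⟶ pullback π ψ) fst
      (by rw [hfstdef]; exact pullback.lift_fst _ _ _)).ShortExact := by
    refine ShortComplex.shortExact_of_iso (S₁ := ShortComplex.mk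
      (pullback.lift t₅ 0 (by rw [w₂, zero_comp]) : T₅ ⟶ pullback ψ π)
      (pullback.snd ψ π) (pullback.lift_snd _ _ _))
      (ShortComplex.isoMk (Iso.refl _) (pullbackSymmetry ψ π) (Iso.refl _) ?_ ?_)
      (stmt8_ses_pullback hses₂ π)
    · apply pullback.hom_ext
      · simp
        exact (pullback.lift_fst (f := π) (g := ψ) _ _ _).trans
          (pullback.lift_snd (f := ψ) (g := π) _ _ _).symm
      · simp
        exact (pullback.lift_snd (f := π) (g := ψ) _ _ _).trans
          (pullback.lift_fst (f := ψ) (g := π) _ _ _).symm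
    · simp [hfstdef]
  -- kernel q ∈ 𝒲 ∩ 𝓕
  have hkfst_iso : kernel fst ≅ T₅ :=
    IsLimit.conePointUniqueUpToIso (kernelIsKernel fst) hsesB.fIsKernel
  have hsesT : (ShortComplex.mk (biprod.inl : T ⟶ T ⊞ Z) biprod.snd (by simp)).ShortExact :=
    ShortComplex.Splitting.shortExact
      { r := biprod.fst, s := biprod.inr }
  have hksnd_iso : kernel (biprod.snd : T ⊞ Z ⟶ Z) ≅ T :=
    IsLimit.conePointUniqueUpToIso (kernelIsKernel _) hsesT.fIsKernel
  have hkfstF : kernel fst ∈ 𝓕 := by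
    rw [hpair₂.right_eq]
    exact stmt8_mem_rightPerp_of_iso hkfst_iso (hpair₂.right_eq ▸ hT₅mem.2)
  have hkfstW : kernel fst ∈ 𝒲 :=
    hsum _ _ hT₅mem.1 ⟨hkfst_iso.hom, hkfst_iso.inv, hkfst_iso.hom_inv_id⟩
  have hksndF : kernel (biprod.snd : T ⊞ Z ⟶ Z) ∈ 𝓕 := by
    rw [hpair₂.right_eq]
    exact stmt8_mem_rightPerp_of_iso hksnd_iso (hpair₂.right_eq ▸ hTmem.2)
  have hksndW : kernel (biprod.snd : T ⊞ Z ⟶ Z) ∈ 𝒲 :=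
    hsum _ _ hTmem.1 ⟨hksnd_iso.hom, hksnd_iso.inv, hksnd_iso.hom_inv_id⟩
  have hsesK : (ShortComplex.mk
      (kernel.lift (fst ≫ biprod.snd) (kernel.ι fst)
        (by rw [← Category.assoc, kernel.condition, zero_comp]))
      (kernel.lift biprod.snd (kernel.ι (fst ≫ biprod.snd) ≫ fst)
        (by rw [Category.assoc, kernel.condition]))
      (by rw [← cancel_mono (kernel.ι (biprod.snd : T ⊞ Z ⟶ Z)), Category.assoc,
          kernel.lift_ι, ← Category.assoc, kernel.lift_ι, kernel.condition, zero_comp])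
      ).ShortExact :=
    stmt8_ses_ker_comp fst biprod.snd _ _ (kernel.lift_ι _ _ _) (kernel.lift_ι _ _ _) _
  have hkqF : kernel q ∈ 𝓕 := by
    rw [hpair₂.right_eq]
    exact stmt8_rightPerp_extension hsesK (hpair₂.right_eq ▸ hkfstF)
      (hpair₂.right_eq ▸ hksndF)
  have hkqW : kernel q ∈ 𝒲 := (h23 _ _ _ _ _ _ hsesK).2.1 hkfstW hksndW
  -- cokernel j ≅ C₅
  have hcok_iso : cokernel j ≅ C₅ :=
    IsColimit.coconePointUniqueUpToIso (cokernelIsCokernel j) hsesC.gIsCokernel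
  have hcokC : cokernel j ∈ 𝒞 := by
    rw [hpair₁.left_eq]
    exact stmt8_mem_leftPerp_of_iso hcok_iso (hpair₁.left_eq ▸ hC₅mem)
  -- the snake argument: C₅ ∈ 𝒲
  have ekf : kernel f ≅ kernel p := kernelCompMono p i
  have hKW : kernel f ∈ 𝒲 := hsum _ _ hpker.1 ⟨ekf.hom, ekf.inv, ekf.hom_inv_id⟩
  have ecf : cokernel f ≅ cokernel i := cokernelEpiComp p i
  have hDW : cokernel f ∈ 𝒲 := hsum _ _ hicoker.2 ⟨ecf.hom, ecf.inv, ecf.hom_inv_id⟩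
  have hC₅W : C₅ ∈ 𝒲 := stmt8_snake j snd q hsesC f hjq 𝒲 h23 hKW hDW hkqW
  have hcokW : cokernel j ∈ 𝒲 :=
    hsum _ _ hC₅W ⟨hcok_iso.hom, hcok_iso.inv, hcok_iso.hom_inv_id⟩
  exact ⟨_, j, q, ‹_›, ⟨hcokC, hcokW⟩, ‹_›, ⟨hkqW, hkqF⟩, hjq⟩


end Aux
end
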